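/- arXiv:1912.04933 — 3 statements merged into one kernel-verified Lean document; each statement's English description precedes it below -/
import Mathlib

section
/- Let S ⊂ Z_{>0} be a finite set of positive integers and let n ≥ 1 be an integer with S ⊆ [n−1]. For 1 ≤ k ≤ n define b_k(S,n;q) = Σ q^{ℓ(w)}, the sum being over all w ∈ A(S;n) with w(n) = k. Then the sequence (b_k(S,n;q))_{k=1,...,n} is strongly q-log concave. -/
open Polynomial Finset

noncomputable section

/-- The number of inversions (the Coxeter length) of a permutation of `Fin n`. -/
def invNum {n : ℕ} (π : Equiv.Perm (Fin n)) : ℕ :=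
  (Finset.univ.filter fun p : Fin n × Fin n => p.1 < p.2 ∧ π p.2 < π p.1).card

/-- The descent set of a permutation, as a set of positive integers (1-indexed positions):
`i ∈ Des(π)` iff `1 ≤ i ≤ n-1` and `π_i > π_{i+1}` in one-line notation. -/
def DesSet {n : ℕ} (π : Equiv.Perm (Fin n)) : Finset ℕ :=
  (Finset.univ.filter fun a : Fin n => ∃ b : Fin n, (a : ℕ) + 1 = (b : ℕ) ∧ π b < π a).image
    fun a : Fin n => (a : ℕ) + 1

/-- The peak set of a permutation (1-indexed positions):
`i ∈ Peak(π)` iff `2 ≤ i ≤ n-1` and `π_{i-1} < π_i > π_{i+1}` in one-line notation. -/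
def PeakSet {n : ℕ} (π : Equiv.Perm (Fin n)) : Finset ℕ :=
  (Finset.univ.filter fun b : Fin n =>
      ∃ a c : Fin n, (a : ℕ) + 1 = (b : ℕ) ∧ (b : ℕ) + 1 = (c : ℕ) ∧ π a < π b ∧ π c < π b).image
    fun b : Fin n => (b : ℕ) + 1

/-- The q-integer `[j]_q = 1 + q + ⋯ + q^(j-1)`. -/
def qNum (j : ℕ) : Polynomial ℝ := ∑ i ∈ Finset.range j, X ^ i

/-- The q-factorial `[n]!_q = [1]_q [2]_q ⋯ [n]_q`. -/
def qFactorial : ℕ → Polynomial ℝ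
  | 0 => 1
  | n + 1 => qFactorial n * qNum (n + 1)

/-- The q-binomial coefficient `[n choose k]_q = [n]!_q / ([k]!_q [n-k]!_q)`.
(The divisor is monic and the division is exact, so `divByMonic` gives the true quotient.) -/
def qBinom (n k : ℕ) : Polynomial ℝ :=
  qFactorial n /ₘ (qFactorial k * qFactorial (n - k))

/-- `(−q;q)_k = (1+q)(1+q²)⋯(1+q^k)`. -/
def qPoch (k : ℕ) : Polynomial ℝ := ∏ i ∈ Finset.range k, (1 + X ^ (i + 1))

/-- `D_S(n,q) = Σ_{π ∈ 𝔖_n, Des(π) = S} q^{ℓ(π)}`. -/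
def Dpoly (S : Finset ℕ) (n : ℕ) : Polynomial ℝ :=
  ∑ π ∈ Finset.univ.filter (fun π : Equiv.Perm (Fin n) => DesSet π = S), X ^ invNum π

/-- `P_S(n,q) = Σ_{π ∈ 𝔖_n, Peak(π) = S} q^{ℓ(π)}`. -/
def Ppoly (S : Finset ℕ) (n : ℕ) : Polynomial ℝ :=
  ∑ π ∈ Finset.univ.filter (fun π : Equiv.Perm (Fin n) => PeakSet π = S), X ^ invNum π

/-- `Q_S(n,q) = Σ_{π ∈ 𝔖_n, Peak(π) ⊇ S} q^{ℓ(π)}`. -/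
def Qpoly (S : Finset ℕ) (n : ℕ) : Polynomial ℝ :=
  ∑ π ∈ Finset.univ.filter (fun π : Equiv.Perm (Fin n) => S ⊆ PeakSet π), X ^ invNum π

/-- The sequence `(a i)` for `lo ≤ i ≤ hi` is strongly q-log concave: it has no internal
zeroes and `a i * a j - a (i-1) * a (j+1)` has nonnegative coefficients for `lo < i ≤ j < hi`. -/
def StronglyQLogConcave (lo hi : ℕ) (a : ℕ → Polynomial ℝ) : Prop :=
  (∀ i j l : ℕ, lo ≤ i → i < j → j < l → l ≤ hi → a i ≠ 0 → a l ≠ 0 → a j ≠ 0) ∧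
  ∀ i j : ℕ, lo < i → i ≤ j → j < hi → ∀ m : ℕ,
    0 ≤ (a i * a j - a (i - 1) * a (j + 1)).coeff m


/-- `b_k(S,n;q) = Σ q^{ℓ(w)}` over `w ∈ A(S;n)` with `w(n) = k` (one-line notation,
positions and values 1-indexed). -/
def bkpoly (S : Finset ℕ) (n k : ℕ) : Polynomial ℝ :=
  ∑ w ∈ Finset.univ.filter (fun w : Equiv.Perm (Fin n) =>
      DesSet w = S ∧ ∃ j : Fin n, (j : ℕ) + 1 = n ∧ (w j : ℕ) + 1 = k),
    X ^ invNum w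



set_option maxHeartbeats 1000000

/-! ### extension of a permutation by a last value -/

def extL {m : ℕ} (v : Fin (m+1)) (w' : Equiv.Perm (Fin m)) : Equiv.Perm (Fin (m+1)) :=
  finSuccEquivLast.trans (w'.optionCongr.trans (finSuccEquiv' v).symm)

@[simp] lemma extL_last {m : ℕ} (v : Fin (m+1)) (w' : Equiv.Perm (Fin m)) :
    extL v w' (Fin.last m) = v := by
  simp [extL]

@[simp] lemma extL_castSucc {m : ℕ} (v : Fin (m+1)) (w' : Equiv.Perm (Fin m)) (a : Fin m) :
    extL v w' (Fin.castSucc a) = v.succAbove (w' a) := by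
  simp [extL]

lemma extL_injective {m : ℕ} (v : Fin (m+1)) : Function.Injective (extL v) := by
  intro w1 w2 h
  ext a
  have := congrArg (fun w : Equiv.Perm (Fin (m+1)) => w (Fin.castSucc a)) h
  simp only [extL_castSucc] at this
  exact Fin.val_eq_of_eq (Fin.succAbove_right_injective this)

lemma extL_surjective {m : ℕ} (v : Fin (m+1)) (w : Equiv.Perm (Fin (m+1)))
    (hw : w (Fin.last m) = v) : ∃ w', extL v w' = w := by
  classical
  set E : Option (Fin m) ≃ Option (Fin m) :=
    finSuccEquivLast.symm.trans ((w : Equiv.Perm (Fin (m+1))).trans (finSuccEquiv' v)) with hE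
  have hnone : E none = none := by
    simp [hE, hw, finSuccEquiv'_at]
  refine ⟨Equiv.removeNone E, ?_⟩
  ext a
  rcases Fin.eq_castSucc_or_eq_last a with ⟨b, rfl⟩ | rfl
  · have h1 : ∃ x, E (some b) = some x := by
      rcases h : E (some b) with _ | x
      · exfalso
        have := E.injective (h.trans hnone.symm)
        simp at this
      · exact ⟨x, rfl⟩
    have h2 : some (Equiv.removeNone E b) = E (some b) := Equiv.removeNone_some E h1
    have h3 : E (some b) = finSuccEquiv' v (w (Fin.castSucc b)) := by
      simp [hE]
    rw [h3] at h2
    have := congrArg (finSuccEquiv' v).symm h2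
    simp only [Equiv.symm_apply_apply, finSuccEquiv'_symm_some] at this
    simp only [extL_castSucc]
    exact Fin.val_eq_of_eq this
  · simp [hw]

lemma card_val_le {m : ℕ} (x : ℕ) :
    (Finset.univ.filter fun b : Fin m => x ≤ (b : ℕ)).card = m - x := by
  rw [← Nat.card_Ico x m]
  apply Finset.card_nbij (i := Fin.val)
  · intro b hb
    simp only [Finset.mem_coe, mem_filter, mem_univ, true_and] at hb
    simp [Finset.mem_Ico, hb, b.isLt]
  · intro b _ c _ h
    exact Fin.val_injective h
  · intro y hy
    simp only [coe_filter, Set.mem_image] at *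
    rcases Finset.mem_Ico.mp hy with ⟨h1, h2⟩
    exact ⟨⟨y, h2⟩, by simp [h1]⟩

lemma invNum_extL {m : ℕ} (v : Fin (m+1)) (w' : Equiv.Perm (Fin m)) :
    invNum (extL v w') = invNum w' + (m - (v : ℕ)) := by
  classical
  set w := extL v w' with hw
  set T : Finset (Fin (m+1) × Fin (m+1)) :=
    Finset.univ.filter (fun p : Fin (m+1) × Fin (m+1) => p.1 < p.2 ∧ w p.2 < w p.1) with hT
  have hsplit := Finset.card_filter_add_card_filter_not
    (s := T) (p := fun p : Fin (m+1) × Fin (m+1) => p.2 ≠ Fin.last m)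
  have h1 : invNum w' = (T.filter fun p => p.2 ≠ Fin.last m).card := by
    unfold invNum
    apply Finset.card_nbij (i := fun q : Fin m × Fin m => (Fin.castSucc q.1, Fin.castSucc q.2))
    · intro q hq
      simp only [Finset.mem_coe, mem_filter, mem_univ, true_and, hT] at hq ⊢
      refine ⟨⟨by simpa using hq.1, ?_⟩, Fin.ne_last_of_lt (Fin.castSucc_lt_last _)⟩
      simpa [hw, Fin.succAbove_lt_succAbove_iff] using hq.2
    · intro q _ r _ h
      simp only [Prod.ext_iff, Fin.castSucc_inj] at h
      exact Prod.ext h.1 h.2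
    · intro p hp
      simp only [coe_filter, mem_filter, mem_univ, true_and, Set.mem_setOf_eq, hT,
        Set.mem_image] at hp ⊢
      obtain ⟨⟨h12, hinv⟩, hne2⟩ := hp
      obtain ⟨b, hb⟩ := Fin.exists_castSucc_eq.mpr hne2
      have hne1 : p.1 ≠ Fin.last m := Fin.ne_last_of_lt h12
      obtain ⟨a, ha⟩ := Fin.exists_castSucc_eq.mpr hne1
      refine ⟨(a, b), ⟨?_, ?_⟩, by simp [ha, hb]⟩
      · rw [← ha, ← hb] at h12; simpa using h12
      · rw [← ha, ← hb] at hinv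
        simpa [hw, Fin.succAbove_lt_succAbove_iff] using hinv
  have h2 : m - (v : ℕ) = (T.filter fun p => ¬ p.2 ≠ Fin.last m).card := by
    rw [← card_val_le (m := m) (x := (v : ℕ))]
    have hcard : (Finset.univ.filter fun b : Fin m => ((v : ℕ) ≤ (b : ℕ))).card
        = (Finset.univ.filter fun a : Fin m => ((v : ℕ) ≤ (w' a : ℕ))).card := by
      apply Finset.card_equiv w'.symm
      intro a
      simp
    rw [hcard]
    apply Finset.card_nbij (i := fun a : Fin m => (Fin.castSucc a, Fin.last m))
    · intro a ha
      simp only [Finset.mem_coe, mem_filter, mem_univ, true_and, hT] at ha ⊢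
      refine ⟨⟨Fin.castSucc_lt_last _, ?_⟩, by simp⟩
      simp only [hw, extL_last, extL_castSucc]
      rw [Fin.lt_succAbove_iff_le_castSucc]
      simpa [Fin.le_def] using ha
    · intro a _ b _ h
      simp only [Prod.ext_iff, Fin.castSucc_inj] at h
      exact h.1
    · intro p hp
      simp only [coe_filter, mem_filter, mem_univ, true_and, Set.mem_setOf_eq, hT,
        Set.mem_image, not_not] at hp ⊢
      obtain ⟨⟨h12, hinv⟩, hne2⟩ := hp
      have hne1 : p.1 ≠ Fin.last m := Fin.ne_last_of_lt h12
      obtain ⟨a, ha⟩ := Fin.exists_castSucc_eq.mpr hne1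
      refine ⟨a, ?_, by rw [ha, ← hne2]⟩
      rw [← ha, hne2] at hinv
      simp only [hw, extL_last, extL_castSucc] at hinv
      rw [Fin.lt_succAbove_iff_le_castSucc] at hinv
      simpa [Fin.le_def] using hinv
  show T.card = _
  rw [← hsplit, ← h1, ← h2]

lemma mem_DesSet {n : ℕ} (w : Equiv.Perm (Fin n)) (x : ℕ) :
    x ∈ DesSet w ↔ ∃ a b : Fin n, (a : ℕ) + 1 = (b : ℕ) ∧ w b < w a ∧ (a : ℕ) + 1 = x := by
  simp only [DesSet, Finset.mem_image, mem_filter, mem_univ, true_and]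
  constructor
  · rintro ⟨a, ⟨b, hb1, hb2⟩, hx⟩
    exact ⟨a, b, hb1, hb2, hx⟩
  · rintro ⟨a, b, hb1, hb2, hx⟩
    exact ⟨a, ⟨b, hb1, hb2⟩, hx⟩

lemma desSet_mem_lt {n : ℕ} (w : Equiv.Perm (Fin n)) (x : ℕ) (hx : x ∈ DesSet w) :
    1 ≤ x ∧ x < n := by
  rw [mem_DesSet] at hx
  obtain ⟨a, b, h1, _, h3⟩ := hx
  have := b.isLt
  omega

lemma desSet_extL_lt {r : ℕ} (v : Fin (r+2)) (w' : Equiv.Perm (Fin (r+1)))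
    (h : ((w' (Fin.last r)) : ℕ) < (v : ℕ)) : DesSet (extL v w') = DesSet w' := by
  ext x
  rw [mem_DesSet, mem_DesSet]
  constructor
  · rintro ⟨a, b, h1, h2, h3⟩
    rcases Nat.lt_or_ge (b : ℕ) (r+1) with hb | hb
    · have hbne : b ≠ Fin.last (r+1) := by
        simp [Fin.ext_iff]; omega
      obtain ⟨b', rfl⟩ := Fin.exists_castSucc_eq.mpr hbne
      have hane : a ≠ Fin.last (r+1) := Fin.ne_last_of_lt (show a < b'.castSucc by
        rw [Fin.lt_def]; omega)
      obtain ⟨a', rfl⟩ := Fin.exists_castSucc_eq.mpr hane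
      refine ⟨a', b', by simpa using h1, ?_, by simpa using h3⟩
      simp only [extL_castSucc] at h2
      exact (Fin.succAbove_lt_succAbove_iff).mp h2
    · -- b = last
      exfalso
      have hb' : b = Fin.last (r+1) := by
        have := b.isLt; apply Fin.ext; simp; omega
      have ha' : a = Fin.castSucc (Fin.last r) := by
        apply Fin.ext; rw [hb'] at h1; simp at h1 ⊢; omega
      rw [hb', ha'] at h2
      simp only [extL_last, extL_castSucc] at h2
      rw [Fin.lt_succAbove_iff_le_castSucc, Fin.le_def] at h2
      simp at h2
      omega
  · rintro ⟨a', b', h1, h2, h3⟩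
    refine ⟨a'.castSucc, b'.castSucc, by simpa using h1, ?_, by simpa using h3⟩
    simp only [extL_castSucc]
    exact (Fin.succAbove_lt_succAbove_iff).mpr h2

lemma desSet_extL_le {r : ℕ} (v : Fin (r+2)) (w' : Equiv.Perm (Fin (r+1)))
    (h : (v : ℕ) ≤ ((w' (Fin.last r)) : ℕ)) :
    DesSet (extL v w') = insert (r+1) (DesSet w') := by
  ext x
  rw [mem_DesSet, Finset.mem_insert, mem_DesSet]
  constructor
  · rintro ⟨a, b, h1, h2, h3⟩
    rcases Nat.lt_or_ge (b : ℕ) (r+1) with hb | hb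
    · have hbne : b ≠ Fin.last (r+1) := by
        simp [Fin.ext_iff]; omega
      obtain ⟨b', rfl⟩ := Fin.exists_castSucc_eq.mpr hbne
      have hane : a ≠ Fin.last (r+1) := Fin.ne_last_of_lt (show a < b'.castSucc by
        rw [Fin.lt_def]; omega)
      obtain ⟨a', rfl⟩ := Fin.exists_castSucc_eq.mpr hane
      refine Or.inr ⟨a', b', by simpa using h1, ?_, by simpa using h3⟩
      simp only [extL_castSucc] at h2
      exact (Fin.succAbove_lt_succAbove_iff).mp h2
    · left
      have := b.isLt
      omega
  · rintro (rfl | ⟨a', b', h1, h2, h3⟩)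
    · refine ⟨Fin.castSucc (Fin.last r), Fin.last (r+1), by simp, ?_, by simp⟩
      simp only [extL_last, extL_castSucc]
      rw [Fin.lt_succAbove_iff_le_castSucc, Fin.le_def]
      simpa using h
    · refine ⟨a'.castSucc, b'.castSucc, by simpa using h1, ?_, by simpa using h3⟩
      simp only [extL_castSucc]
      exact (Fin.succAbove_lt_succAbove_iff).mpr h2

lemma bkpoly_eq_sum_last (S : Finset ℕ) (r k : ℕ) :
    bkpoly S (r+1) k = ∑ w ∈ Finset.univ.filter (fun w : Equiv.Perm (Fin (r+1)) =>
      DesSet w = S ∧ ((w (Fin.last r) : ℕ) + 1 = k)), X ^ invNum w := by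
  unfold bkpoly
  congr 1
  apply Finset.filter_congr
  intro w _
  constructor
  · rintro ⟨h1, j, hj1, hj2⟩
    have : j = Fin.last r := by apply Fin.ext; simp; omega
    exact ⟨h1, by rw [← this]; exact hj2⟩
  · rintro ⟨h1, h2⟩
    exact ⟨h1, Fin.last r, by simp, h2⟩

lemma key_step2 (S S' : Finset ℕ) (r : ℕ) (i : ℕ) (hi1 : 1 ≤ i) (hi2 : i ≤ r+2)
    (C : Equiv.Perm (Fin (r+1)) → Prop) [DecidablePred C]
    (hC : ∀ w' : Equiv.Perm (Fin (r+1)),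
      (DesSet (extL (⟨i-1, by omega⟩ : Fin (r+2)) w') = S ↔ (DesSet w' = S' ∧ C w'))) :
    bkpoly S (r+2) i
      = ∑ w' ∈ Finset.univ.filter (fun w' : Equiv.Perm (Fin (r+1)) => DesSet w' = S' ∧ C w'),
          X ^ (invNum w' + (r+2-i)) := by
  set v : Fin (r+2) := ⟨i-1, by omega⟩ with hv
  rw [bkpoly_eq_sum_last]
  symm
  apply Finset.sum_nbij (i := extL v)
  · intro w' hw'
    simp only [mem_filter, mem_univ, true_and] at hw' ⊢
    refine ⟨(hC w').mpr hw', ?_⟩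
    rw [extL_last, hv]
    simp; omega
  · intro a _ b _ h
    exact extL_injective v h
  · intro w hw
    simp only [coe_filter, mem_filter, mem_univ, true_and, Set.mem_setOf_eq,
      Set.mem_image] at hw ⊢
    obtain ⟨h1, h2⟩ := hw
    have hlast : w (Fin.last (r+1)) = v := by
      apply Fin.ext; simp [hv]; omega
    obtain ⟨w', rfl⟩ := extL_surjective v w hlast
    exact ⟨w', (hC w').mp h1, rfl⟩
  · intro w' _
    rw [invNum_extL]
    congr 1
    simp [hv]
    omega


lemma key_step3 (S' : Finset ℕ) (r : ℕ) (e : ℕ) (t : Finset ℕ)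
    (C : Equiv.Perm (Fin (r+1)) → Prop) [DecidablePred C]
    (hmem : ∀ w' : Equiv.Perm (Fin (r+1)), DesSet w' = S' →
      (C w' ↔ (w' (Fin.last r) : ℕ) + 1 ∈ t)) :
    ∑ w' ∈ Finset.univ.filter (fun w' : Equiv.Perm (Fin (r+1)) => DesSet w' = S' ∧ C w'),
        (X : Polynomial ℝ) ^ (invNum w' + e)
      = X^e * ∑ k ∈ t, bkpoly S' (r+1) k := by
  classical
  have hsum1 : ∑ w' ∈ Finset.univ.filter (fun w' : Equiv.Perm (Fin (r+1)) =>
        DesSet w' = S' ∧ C w'), (X : Polynomial ℝ) ^ (invNum w' + e)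
      = X^e * ∑ w' ∈ Finset.univ.filter (fun w' : Equiv.Perm (Fin (r+1)) =>
        DesSet w' = S' ∧ C w'), (X : Polynomial ℝ) ^ invNum w' := by
    rw [Finset.mul_sum]
    apply Finset.sum_congr rfl
    intro w' _
    rw [pow_add, mul_comm]
  rw [hsum1]
  congr 1
  have hfib := Finset.sum_fiberwise_of_maps_to
    (s := Finset.univ.filter (fun w' : Equiv.Perm (Fin (r+1)) => DesSet w' = S' ∧ C w'))
    (t := t)
    (g := fun w' => (w' (Fin.last r) : ℕ) + 1)
    (f := fun w' => (X : Polynomial ℝ) ^ invNum w')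
    (by intro w' hw'
        simp only [mem_filter, mem_univ, true_and] at hw'
        exact (hmem w' hw'.1).mp hw'.2)
  rw [← hfib]
  apply Finset.sum_congr rfl
  intro k hk
  rw [bkpoly_eq_sum_last, Finset.filter_filter]
  apply Finset.sum_congr _ (fun _ _ => rfl)
  apply Finset.filter_congr
  intro w' _
  constructor
  · rintro ⟨⟨h1, _⟩, h3⟩; exact ⟨h1, h3⟩
  · rintro ⟨h1, h2⟩; exact ⟨⟨h1, (hmem w' h1).mpr (h2 ▸ hk)⟩, h2⟩

lemma key_notmem (S : Finset ℕ) (r : ℕ) (hmS : r+1 ∉ S) (i : ℕ) (hi1 : 1 ≤ i) (hi2 : i ≤ r+2) :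
    bkpoly S (r+2) i = X^(r+2-i) * ∑ k ∈ Finset.range i, bkpoly S (r+1) k := by
  classical
  set v : Fin (r+2) := ⟨i-1, by omega⟩ with hv
  have hkey := key_step2 S S r i hi1 hi2 (fun w' => ((w' (Fin.last r) : ℕ) < i-1)) ?_
  · rw [hkey]
    apply key_step3
    intro w' _
    simp only [Finset.mem_range]
    omega
  · intro w'
    rcases Nat.lt_or_ge ((w' (Fin.last r)) : ℕ) (i-1) with hlt | hge
    · rw [desSet_extL_lt v w' (by simpa [hv] using hlt)]
      simp [hlt]
    · rw [desSet_extL_le v w' (by simpa [hv] using hge)]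
      constructor
      · intro h
        exfalso; apply hmS; rw [← h]; exact Finset.mem_insert_self _ _
      · rintro ⟨_, h2⟩; omega

lemma key_mem (S : Finset ℕ) (r : ℕ) (hmS : r+1 ∈ S) (i : ℕ) (hi1 : 1 ≤ i) (hi2 : i ≤ r+2) :
    bkpoly S (r+2) i
      = X^(r+2-i) * ∑ k ∈ Finset.Icc i (r+1), bkpoly (S.erase (r+1)) (r+1) k := by
  classical
  set v : Fin (r+2) := ⟨i-1, by omega⟩ with hv
  have hkey := key_step2 S (S.erase (r+1)) r i hi1 hi2 (fun w' => (i-1 ≤ (w' (Fin.last r) : ℕ))) ?_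
  · rw [hkey]
    apply key_step3
    intro w' _
    have := (w' (Fin.last r)).isLt
    simp only [Finset.mem_Icc]
    omega
  · intro w'
    rcases Nat.lt_or_ge ((w' (Fin.last r)) : ℕ) (i-1) with hlt | hge
    · rw [desSet_extL_lt v w' (by simpa [hv] using hlt)]
      constructor
      · rintro rfl
        exfalso
        exact absurd ((desSet_mem_lt w' (r+1) hmS).2) (by omega)
      · rintro ⟨_, h2⟩; omega
    · rw [desSet_extL_le v w' (by simpa [hv] using hge)]
      have hnotmem : r+1 ∉ DesSet w' := fun h => by
        have := (desSet_mem_lt w' (r+1) h).2; omega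
      constructor
      · intro h
        refine ⟨?_, hge⟩
        rw [← h, Finset.erase_insert hnotmem]
      · rintro ⟨h1, _⟩
        rw [h1, Finset.insert_erase hmS]

lemma bkpoly_coeff_nonneg (S : Finset ℕ) (n k M : ℕ) : 0 ≤ (bkpoly S n k).coeff M := by
  unfold bkpoly
  rw [Polynomial.finset_sum_coeff]
  apply Finset.sum_nonneg
  intro w _
  rw [Polynomial.coeff_X_pow]
  positivity

lemma mul_coeff_nonneg_aux (P Q : Polynomial ℝ) (hP : ∀ M, 0 ≤ P.coeff M)
    (hQ : ∀ M, 0 ≤ Q.coeff M) (M : ℕ) : 0 ≤ (P * Q).coeff M := by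
  rw [Polynomial.coeff_mul]
  exact Finset.sum_nonneg fun p _ => mul_nonneg (hP _) (hQ _)

lemma bkpoly_zero (S : Finset ℕ) (n : ℕ) : bkpoly S n 0 = 0 := by
  unfold bkpoly
  have hempty : (Finset.univ.filter (fun w : Equiv.Perm (Fin n) =>
      DesSet w = S ∧ ∃ j : Fin n, (j : ℕ) + 1 = n ∧ (w j : ℕ) + 1 = 0)) = ∅ := by
    ext w
    simp only [mem_filter, Finset.notMem_empty, iff_false, not_and]
    rintro _ ⟨j, _, hj2⟩
    omega
  rw [hempty, Finset.sum_empty]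

lemma iter_step (a : ℕ → Polynomial ℝ) (lo hi : ℕ)
    (h : ∀ i j, lo < i → i ≤ j → j < hi → ∀ M, 0 ≤ (a i * a j - a (i - 1) * a (j + 1)).coeff M) :
    ∀ d x u, lo ≤ x → x + d ≤ u → u + d ≤ hi → ∀ M,
      (a x * a (u + d)).coeff M ≤ (a (x + d) * a u).coeff M := by
  intro d
  induction d with
  | zero => intro x u _ _ _ M; simp
  | succ d ih =>
    intro x u hx hxu hhi M
    have step : (a x * a (u + d + 1)).coeff M ≤ (a (x+1) * a (u + d)).coeff M := by
      have := h (x+1) (u+d) (by omega) (by omega) (by omega) M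
      rw [Polynomial.coeff_sub] at this
      simp only [Nat.add_sub_cancel] at this
      linarith
    have hue : u + (d + 1) = u + d + 1 := by omega
    rw [hue]
    refine le_trans step ?_
    have := ih (x+1) u (by omega) (by omega) (by omega) M
    have hxe : x + 1 + d = x + (d + 1) := by omega
    rwa [hxe] at this

lemma iter' (a : ℕ → Polynomial ℝ) (lo hi : ℕ)
    (h : ∀ i j, lo < i → i ≤ j → j < hi → ∀ M, 0 ≤ (a i * a j - a (i - 1) * a (j + 1)).coeff M)
    (x y x' y' : ℕ) (h1 : lo ≤ x) (h2 : x ≤ x') (h3 : x ≤ y') (h4 : x' ≤ y) (h5 : y' ≤ y)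
    (h6 : y ≤ hi) (h7 : x + y = x' + y') (M : ℕ) :
    (a x * a y).coeff M ≤ (a x' * a y').coeff M := by
  rcases le_total x' y' with hc | hc
  · have hd : x' = x + (x' - x) := by omega
    have hy : y = y' + (x' - x) := by omega
    rw [hd, hy]
    exact iter_step a lo hi h (x' - x) x y' h1 (by omega) (by omega) M
  · have hd : y' = x + (y' - x) := by omega
    have hy : y = x' + (y' - x) := by omega
    rw [hd, hy, mul_comm (a x')]
    exact iter_step a lo hi h (y' - x) x x' h1 (by omega) (by omega) M

lemma caseA (a : ℕ → Polynomial ℝ) (m : ℕ)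
    (hnn : ∀ k M, 0 ≤ (a k).coeff M) (h0 : a 0 = 0)
    (h : ∀ i j, 1 < i → i ≤ j → j < m → ∀ M, 0 ≤ (a i * a j - a (i - 1) * a (j + 1)).coeff M)
    (i j : ℕ) (h2i : 2 ≤ i) (hij : i ≤ j) (hjm : j ≤ m) (M : ℕ) :
    0 ≤ ((∑ k ∈ Finset.range i, a k) * (∑ l ∈ Finset.range j, a l)
        - (∑ k ∈ Finset.range (i-1), a k) * (∑ l ∈ Finset.range (j+1), a l)).coeff M := by
  obtain ⟨p, rfl⟩ : ∃ p, i = p + 1 := ⟨i - 1, by omega⟩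
  have hred : (∑ k ∈ Finset.range (p+1), a k) * (∑ l ∈ Finset.range j, a l)
      - (∑ k ∈ Finset.range (p+1-1), a k) * (∑ l ∈ Finset.range (j+1), a l)
      = a p * (∑ l ∈ Finset.range j, a l) - (∑ k ∈ Finset.range p, a k) * a j := by
    simp only [Nat.add_sub_cancel]
    rw [Finset.sum_range_succ (n := p), Finset.sum_range_succ (n := j)]
    ring
  rw [hred, Polynomial.coeff_sub, sub_nonneg, Finset.mul_sum, Finset.sum_mul,
    Polynomial.finset_sum_coeff, Polynomial.finset_sum_coeff]
  calc ∑ k ∈ Finset.range p, (a k * a j).coeff M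
      ≤ ∑ k ∈ Finset.range p, (a p * a (k + (j - p))).coeff M := by
        apply Finset.sum_le_sum
        intro k hk
        simp only [Finset.mem_range] at hk
        rcases Nat.eq_zero_or_pos k with rfl | hkpos
        · rw [h0, zero_mul, Polynomial.coeff_zero]
          have := hnn p
          have := hnn (0 + (j - p))
          exact mul_coeff_nonneg_aux (a p) (a (0 + (j-p))) (hnn p) (hnn _) M
        · exact iter' a 1 m h k j p (k + (j - p)) hkpos (by omega) (by omega) (by omega)
            (by omega) (by omega) (by omega) M
    _ = ∑ l ∈ (Finset.range p).image (fun k => k + (j - p)), (a p * a l).coeff M := by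
        rw [Finset.sum_image]
        intro b _ c _ hbc
        simp only at hbc
        omega
    _ ≤ ∑ l ∈ Finset.range j, (a p * a l).coeff M := by
        apply Finset.sum_le_sum_of_subset_of_nonneg
        · intro l hl
          simp only [Finset.mem_image, Finset.mem_range] at hl ⊢
          omega
        · intro l _ _
          exact mul_coeff_nonneg_aux (a p) (a l) (hnn p) (hnn l) M

lemma Icc_insert_bot {a b : ℕ} (hab : a ≤ b) :
    Finset.Icc a b = insert a (Finset.Icc (a+1) b) := by
  ext x
  simp only [Finset.mem_Icc, Finset.mem_insert]
  omega

lemma caseB (a : ℕ → Polynomial ℝ) (m : ℕ)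
    (hnn : ∀ k M, 0 ≤ (a k).coeff M)
    (h : ∀ i j, 1 < i → i ≤ j → j < m → ∀ M, 0 ≤ (a i * a j - a (i - 1) * a (j + 1)).coeff M)
    (i j : ℕ) (h2i : 2 ≤ i) (hij : i ≤ j) (hjm : j ≤ m) (M : ℕ) :
    0 ≤ ((∑ k ∈ Finset.Icc i m, a k) * (∑ l ∈ Finset.Icc j m, a l)
        - (∑ k ∈ Finset.Icc (i-1) m, a k) * (∑ l ∈ Finset.Icc (j+1) m, a l)).coeff M := by
  have e1 : Finset.Icc (i-1) m = insert (i-1) (Finset.Icc i m) := by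
    rw [Icc_insert_bot (show i-1 ≤ m by omega), show i-1+1 = i from by omega]
  have e2 : Finset.Icc j m = insert j (Finset.Icc (j+1) m) := Icc_insert_bot (by omega)
  have hni : (i-1) ∉ Finset.Icc i m := by simp [Finset.mem_Icc]; omega
  have hnj : j ∉ Finset.Icc (j+1) m := by simp [Finset.mem_Icc]
  have hred : (∑ k ∈ Finset.Icc i m, a k) * (∑ l ∈ Finset.Icc j m, a l)
      - (∑ k ∈ Finset.Icc (i-1) m, a k) * (∑ l ∈ Finset.Icc (j+1) m, a l)
      = (∑ k ∈ Finset.Icc i m, a k) * a j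
        - a (i-1) * (∑ l ∈ Finset.Icc (j+1) m, a l) := by
    rw [e1, e2, Finset.sum_insert hni, Finset.sum_insert hnj]
    ring
  rw [hred, Polynomial.coeff_sub, sub_nonneg, Finset.mul_sum, Finset.sum_mul,
    Polynomial.finset_sum_coeff, Polynomial.finset_sum_coeff]
  calc ∑ l ∈ Finset.Icc (j+1) m, (a (i-1) * a l).coeff M
      ≤ ∑ l ∈ Finset.Icc (j+1) m, (a (l - (j+1-i)) * a j).coeff M := by
        apply Finset.sum_le_sum
        intro l hl
        simp only [Finset.mem_Icc] at hl
        exact iter' a 1 m h (i-1) l (l - (j+1-i)) j (by omega) (by omega) (by omega)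
          (by omega) (by omega) (by omega) (by omega) M
    _ = ∑ k ∈ (Finset.Icc (j+1) m).image (fun l => l - (j+1-i)), (a k * a j).coeff M := by
        rw [Finset.sum_image]
        intro b hb c hc hbc
        simp only [Finset.coe_Icc, Set.mem_Icc] at hb hc hbc
        omega
    _ ≤ ∑ k ∈ Finset.Icc i m, (a k * a j).coeff M := by
        apply Finset.sum_le_sum_of_subset_of_nonneg
        · intro k hk
          simp only [Finset.mem_image, Finset.mem_Icc] at hk ⊢
          omega
        · intro k _ _
          exact mul_coeff_nonneg_aux (a k) (a j) (hnn k) (hnn j) M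


theorem stmt5aux : ∀ n : ℕ, ∀ S : Finset ℕ, (∀ s ∈ S, 1 ≤ s ∧ s ≤ n - 1) →
    StronglyQLogConcave 1 n (bkpoly S n) := by
  intro n
  induction n with
  | zero =>
    intro S _
    exact ⟨fun i j l h1 h2 h3 h4 _ _ => absurd (by omega : ¬ (l ≤ 0)) (by simp [h4]),
      fun i j h1 h2 h3 => absurd (by omega : ¬ (j < 0)) (by simp [h3])⟩
  | succ m ih =>
    intro S hS
    match m, ih with
    | 0, _ =>
      refine ⟨fun i j l h1 h2 h3 h4 _ _ => by omega, fun i j h1 h2 h3 => by omega⟩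
    | r+1, ih =>
      by_cases hmS : (r+1) ∈ S
      · -- case: descent at last position
        set a : ℕ → Polynomial ℝ := bkpoly (S.erase (r+1)) (r+1) with ha
        have IH := ih (S.erase (r+1)) (by
          intro s hs
          rw [Finset.mem_erase] at hs
          have := hS s hs.2
          omega)
        have hnn : ∀ k M, 0 ≤ (a k).coeff M := fun k M => bkpoly_coeff_nonneg _ _ _ _
        constructor
        · intro i j l h1 h2 h3 h4 hbi hbl
          rw [key_mem S r hmS l (by omega) (by omega)] at hbl
          rw [key_mem S r hmS j (by omega) (by omega)]
          have hDl : (∑ k ∈ Finset.Icc l (r+1), a k) ≠ 0 := by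
            intro hzero
            rw [hzero, mul_zero] at hbl
            exact hbl rfl
          obtain ⟨M, hM⟩ : ∃ M, (∑ k ∈ Finset.Icc l (r+1), a k).coeff M ≠ 0 := by
            by_contra hc
            push_neg at hc
            exact hDl (Polynomial.ext fun M => by rw [hc M, Polynomial.coeff_zero])
          have hpos : 0 < (∑ k ∈ Finset.Icc l (r+1), a k).coeff M := by
            rw [Polynomial.finset_sum_coeff] at hM ⊢
            rcases lt_or_eq_of_le (Finset.sum_nonneg fun k _ => hnn k M) with h | h
            · exact h
            · exact absurd h.symm hM
          have hle : (∑ k ∈ Finset.Icc l (r+1), a k).coeff M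
              ≤ (∑ k ∈ Finset.Icc j (r+1), a k).coeff M := by
            rw [Polynomial.finset_sum_coeff, Polynomial.finset_sum_coeff]
            apply Finset.sum_le_sum_of_subset_of_nonneg
            · intro k hk
              simp only [Finset.mem_Icc] at hk ⊢
              omega
            · intro k _ _
              exact hnn k M
          apply mul_ne_zero (pow_ne_zero _ Polynomial.X_ne_zero)
          intro hzero
          have hc0 : (∑ k ∈ Finset.Icc j (r+1), a k).coeff M = 0 := by
            rw [hzero, Polynomial.coeff_zero]
          linarith
        · intro i j h1 h2 h3 M
          rw [key_mem S r hmS i (by omega) (by omega), key_mem S r hmS j (by omega) (by omega),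
            key_mem S r hmS (i-1) (by omega) (by omega), key_mem S r hmS (j+1) (by omega) (by omega)]
          have harith : (i-1) - 1 + 1 = i - 1 := by omega
          have hexp : (r+2-i) + (r+2-j) = (r+2-(i-1)) + (r+2-(j+1)) := by omega
          set Ci := ∑ k ∈ Finset.Icc i (r+1), a k
          set Cj := ∑ k ∈ Finset.Icc j (r+1), a k
          set Ci' := ∑ k ∈ Finset.Icc (i-1) (r+1), a k
          set Cj' := ∑ k ∈ Finset.Icc (j+1) (r+1), a k
          have hA : X^(r+2-i) * Ci * (X^(r+2-j) * Cj)
              = Ci * Cj * X^((r+2-i) + (r+2-j)) := by rw [pow_add]; ring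
          have hB : X^(r+2-(i-1)) * Ci' * (X^(r+2-(j+1)) * Cj')
              = Ci' * Cj' * X^((r+2-(i-1)) + (r+2-(j+1))) := by rw [pow_add]; ring
          rw [hA, hB, ← hexp, ← sub_mul, Polynomial.coeff_mul_X_pow']
          split
          · apply caseB a (r+1) hnn IH.2 i j (by omega) h2 (by omega)
          · exact le_refl 0
      · -- case: no descent at last position
        set a : ℕ → Polynomial ℝ := bkpoly S (r+1) with ha
        have IH := ih S (by
          intro s hs
          have := hS s hs
          have : s ≠ r+1 := fun h => hmS (h ▸ hs)
          omega)
        have hnn : ∀ k M, 0 ≤ (a k).coeff M := fun k M => bkpoly_coeff_nonneg _ _ _ _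
        constructor
        · intro i j l h1 h2 h3 h4 hbi hbl
          rw [key_notmem S r hmS i (by omega) (by omega)] at hbi
          rw [key_notmem S r hmS j (by omega) (by omega)]
          have hDi : (∑ k ∈ Finset.range i, a k) ≠ 0 := by
            intro hzero
            rw [hzero, mul_zero] at hbi
            exact hbi rfl
          obtain ⟨M, hM⟩ : ∃ M, (∑ k ∈ Finset.range i, a k).coeff M ≠ 0 := by
            by_contra hc
            push_neg at hc
            exact hDi (Polynomial.ext fun M => by rw [hc M, Polynomial.coeff_zero])
          have hpos : 0 < (∑ k ∈ Finset.range i, a k).coeff M := by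
            rw [Polynomial.finset_sum_coeff] at hM ⊢
            rcases lt_or_eq_of_le (Finset.sum_nonneg fun k _ => hnn k M) with h | h
            · exact h
            · exact absurd h.symm hM
          have hle : (∑ k ∈ Finset.range i, a k).coeff M
              ≤ (∑ k ∈ Finset.range j, a k).coeff M := by
            rw [Polynomial.finset_sum_coeff, Polynomial.finset_sum_coeff]
            apply Finset.sum_le_sum_of_subset_of_nonneg
            · intro k hk
              simp only [Finset.mem_range] at hk ⊢
              omega
            · intro k _ _
              exact hnn k M
          apply mul_ne_zero (pow_ne_zero _ Polynomial.X_ne_zero)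
          intro hzero
          have hc0 : (∑ k ∈ Finset.range j, a k).coeff M = 0 := by
            rw [hzero, Polynomial.coeff_zero]
          linarith
        · intro i j h1 h2 h3 M
          rw [key_notmem S r hmS i (by omega) (by omega), key_notmem S r hmS j (by omega) (by omega),
            key_notmem S r hmS (i-1) (by omega) (by omega), key_notmem S r hmS (j+1) (by omega) (by omega)]
          have hexp : (r+2-i) + (r+2-j) = (r+2-(i-1)) + (r+2-(j+1)) := by omega
          set Ci := ∑ k ∈ Finset.range i, a k
          set Cj := ∑ k ∈ Finset.range j, a k
          set Ci' := ∑ k ∈ Finset.range (i-1), a k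
          set Cj' := ∑ k ∈ Finset.range (j+1), a k
          have hA : X^(r+2-i) * Ci * (X^(r+2-j) * Cj)
              = Ci * Cj * X^((r+2-i) + (r+2-j)) := by rw [pow_add]; ring
          have hB : X^(r+2-(i-1)) * Ci' * (X^(r+2-(j+1)) * Cj')
              = Ci' * Cj' * X^((r+2-(i-1)) + (r+2-(j+1))) := by rw [pow_add]; ring
          rw [hA, hB, ← hexp, ← sub_mul, Polynomial.coeff_mul_X_pow']
          split
          · apply caseA a (r+1) hnn (bkpoly_zero _ _) IH.2 i j (by omega) h2 (by omega)
          · exact le_refl 0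


/-- the sequence `(b_k(S,n;q))_{k=1,…,n}` is strongly q-log concave. -/
theorem stmt5 (S : Finset ℕ) (n : ℕ) (hn : 1 ≤ n)
    (hS : ∀ s ∈ S, 1 ≤ s ∧ s ≤ n - 1) :
    StronglyQLogConcave 1 n (bkpoly S n) :=
  stmt5aux n S hS

end
end

section
/- Let S ⊂ Z_{>0} be a nonempty finite set of positive integers with m = max(S). For 1 ≤ k ≤ m let a_k(S;q) = Σ q^{ℓ(π)} over all π ∈ A(S; m+k) with [m+1, m+k] ⊆ {π_1, ..., π_m}, and let b_i(S;q) = Σ q^{ℓ(π)} over all π ∈ A(S; m+1) with π(m+1) = i. Then for all 1 ≤ k ≤ m, a_k(S;q) = q^{k(k−1)} · Σ_{i=1}^{m−k+1} [m−i choose k−1]_q · b_i(S;q). -/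
open Polynomial Finset

noncomputable section

/-- Insert a new value `d` at the last position. -/
def insPerm {M : ℕ} (σ : Equiv.Perm (Fin (M+1))) (d : Fin (M+2)) : Equiv.Perm (Fin (M+2)) :=
  finSuccEquivLast.trans ((σ.optionCongr).trans (finSuccEquiv' d).symm)

@[simp] lemma insPerm_last {M : ℕ} (σ : Equiv.Perm (Fin (M+1))) (d : Fin (M+2)) :
    insPerm σ d (Fin.last (M+1)) = d := by
  simp [insPerm, finSuccEquivLast_last]

@[simp] lemma insPerm_castSucc {M : ℕ} (σ : Equiv.Perm (Fin (M+1))) (d : Fin (M+2))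
    (p : Fin (M+1)) : insPerm σ d p.castSucc = d.succAbove (σ p) := by
  simp [insPerm, finSuccEquivLast_castSucc]

/-- Delete the last position's value. -/
def delPerm {M : ℕ} (π : Equiv.Perm (Fin (M+2))) : Equiv.Perm (Fin (M+1)) :=
  Equiv.removeNone (finSuccEquivLast.symm.trans (π.trans (finSuccEquiv' (π (Fin.last (M+1))))))

lemma insPerm_delPerm {M : ℕ} (π : Equiv.Perm (Fin (M+2))) :
    insPerm (delPerm π) (π (Fin.last (M+1))) = π := by
  set d := π (Fin.last (M+1)) with hd
  set e := finSuccEquivLast.symm.trans (π.trans (finSuccEquiv' d)) with he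
  have hnone : e none = none := by
    simp [he, finSuccEquiv'_at, hd]
  have key : ∀ p : Fin (M+1), some (delPerm π p) = e (some p) := by
    intro p
    apply Equiv.removeNone_some
    rcases h : e (some p) with _ | x
    · exfalso
      have := e.injective (h.trans hnone.symm)
      simp at this
    · exact ⟨x, rfl⟩
  apply Equiv.ext
  intro x
  rcases Fin.eq_castSucc_or_eq_last x with ⟨y, rfl⟩ | rfl
  · rw [insPerm_castSucc]
    have h2 := key y
    rw [he] at h2
    simp only [Equiv.trans_apply, finSuccEquivLast_symm_some] at h2
    have : (finSuccEquiv' d).symm (some (delPerm π y)) = (finSuccEquiv' d).symm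
        (finSuccEquiv' d (π y.castSucc)) := by rw [← h2]
    rw [Equiv.symm_apply_apply, finSuccEquiv'_symm_some] at this
    exact this
  · simp [hd]

lemma insPerm_injective {M : ℕ} (d : Fin (M+2)) :
    Function.Injective (fun σ : Equiv.Perm (Fin (M+1)) => insPerm σ d) := by
  intro σ τ h
  apply Equiv.ext
  intro p
  have := congrFun (congrArg (fun (e : Equiv.Perm (Fin (M+2))) => (e : Fin (M+2) → Fin (M+2)))
    h) p.castSucc
  simp only [insPerm_castSucc] at this
  exact (Fin.succAbove_right_injective (p := d)) this

lemma delPerm_insPerm {M : ℕ} (σ : Equiv.Perm (Fin (M+1))) (d : Fin (M+2)) :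
    delPerm (insPerm σ d) = σ := by
  apply insPerm_injective d
  have h := insPerm_delPerm (insPerm σ d)
  simpa [insPerm_last] using h


section Part2
variable {M m : ℕ}

lemma mem_DesSet_iff {n : ℕ} (π : Equiv.Perm (Fin n)) (j : ℕ) :
    j ∈ DesSet π ↔ ∃ a b : Fin n, (a : ℕ) + 1 = (b : ℕ) ∧ π b < π a ∧ (a : ℕ) + 1 = j := by
  simp only [DesSet, mem_image, mem_filter, mem_univ, true_and]
  constructor
  · rintro ⟨a, ⟨b, h1, h2⟩, h3⟩; exact ⟨a, b, h1, h2, h3⟩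
  · rintro ⟨a, b, h1, h2, h3⟩; exact ⟨a, ⟨b, h1, h2⟩, h3⟩

lemma not_descent {n : ℕ} (π : Equiv.Perm (Fin n)) (a b : Fin n)
    (hab : (a : ℕ) + 1 = (b : ℕ)) (h : (a : ℕ) + 1 ∉ DesSet π) : π a < π b := by
  rcases lt_trichotomy (π a) (π b) with h1 | h1 | h1
  · exact h1
  · exact absurd (π.injective h1) (by intro e; subst e; omega)
  · exact absurd ((mem_DesSet_iff π _).2 ⟨a, b, hab, h1, rfl⟩) h

lemma tail_le {S : Finset ℕ} (σ : Equiv.Perm (Fin (M+1))) (hdes : DesSet σ = S)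
    (hSm : ∀ s ∈ S, s ≤ m) (p : Fin (M+1)) (hp : m ≤ (p : ℕ)) :
    σ p ≤ σ (Fin.last M) := by
  suffices H : ∀ j (p : Fin (M+1)), (p : ℕ) + j = M → m ≤ (p : ℕ) → σ p ≤ σ (Fin.last M) by
    exact H (M - p) p (by omega) hp
  intro j
  induction j with
  | zero =>
    intro p hp0 _
    have : p = Fin.last M := Fin.ext (by simpa using hp0)
    simp [this]
  | succ j ih =>
    intro p hp0 hmp
    have hlt : (p : ℕ) + 1 < M + 1 := by omega
    set b : Fin (M+1) := ⟨(p : ℕ) + 1, hlt⟩ with hb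
    have h1 : σ p < σ b := by
      apply not_descent σ p b rfl
      rw [hdes]
      intro hmem
      exact absurd (hSm _ hmem) (by omega)
    have h2 : σ b ≤ σ (Fin.last M) := ih b (by simp [hb]; omega) (by simp [hb]; omega)
    exact le_trans h1.le h2

lemma DesSet_insPerm (σ : Equiv.Perm (Fin (M+1))) (d : Fin (M+2))
    (h : (σ (Fin.last M)).castSucc < d) : DesSet (insPerm σ d) = DesSet σ := by
  ext j
  rw [mem_DesSet_iff, mem_DesSet_iff]
  constructor
  · rintro ⟨a, b, hab, hlt, rfl⟩
    rcases Fin.eq_castSucc_or_eq_last b with ⟨b', rfl⟩ | rfl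
    · have ha' : a ≠ Fin.last (M+1) := by
        intro e; subst e
        have := b'.isLt
        simp [Fin.last] at hab
        omega
      obtain ⟨a', rfl⟩ := Fin.exists_castSucc_eq.2 ha'
      refine ⟨a', b', by simpa using hab, ?_, by simp⟩
      rw [insPerm_castSucc, insPerm_castSucc] at hlt
      exact (Fin.succAbove_lt_succAbove_iff).1 hlt
    · exfalso
      have ha : a = Fin.castSucc (Fin.last M) := by
        apply Fin.ext
        simp only [Fin.coe_castSucc, Fin.val_last] at hab ⊢
        omega
      subst ha
      rw [insPerm_castSucc, insPerm_last] at hlt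
      have h2 : (d.succAbove (σ (Fin.last M))) < d := by
        rw [Fin.succAbove_of_castSucc_lt _ _ h]
        exact h
      exact absurd hlt (not_lt.2 h2.le)
  · rintro ⟨a', b', hab, hlt, rfl⟩
    refine ⟨a'.castSucc, b'.castSucc, by simpa using hab, ?_, by simp⟩
    rw [insPerm_castSucc, insPerm_castSucc]
    exact (Fin.succAbove_lt_succAbove_iff).2 hlt

lemma card_val_ge (M c : ℕ) :
    ((Finset.univ : Finset (Fin (M+1))).filter fun y : Fin (M+1) => c ≤ (y : ℕ)).card = M + 1 - c := by
  have h : ((Finset.univ : Finset (Fin (M+1))).filter fun y : Fin (M+1) => c ≤ (y : ℕ)).map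
      Fin.valEmbedding = Finset.Ico c (M+1) := by
    ext x
    simp only [Finset.mem_map, Finset.mem_filter, Finset.mem_univ, true_and,
      Finset.mem_Ico, Fin.valEmbedding_apply]
    constructor
    · rintro ⟨y, hy, rfl⟩; exact ⟨hy, y.isLt⟩
    · rintro ⟨h1, h2⟩; exact ⟨⟨x, h2⟩, h1, rfl⟩
  rw [← Nat.card_Ico c (M+1), ← h, Finset.card_map]

lemma card_tail_count (σ : Equiv.Perm (Fin (M+1))) (d : Fin (M+2)) :
    (Finset.univ.filter fun x : Fin (M+1) => (d : ℕ) ≤ ((σ x : ℕ))).card = M + 1 - (d : ℕ) := by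
  have h : (Finset.univ.filter fun x : Fin (M+1) => (d : ℕ) ≤ ((σ x : ℕ)))
      = ((Finset.univ : Finset (Fin (M+1))).filter fun y : Fin (M+1) => (d : ℕ) ≤ (y : ℕ)).image σ.symm := by
    ext x
    simp only [Finset.mem_image, Finset.mem_filter, Finset.mem_univ, true_and]
    constructor
    · intro hx; exact ⟨σ x, hx, by simp⟩
    · rintro ⟨y, hy, rfl⟩; simpa using hy
  rw [h, Finset.card_image_of_injective _ σ.symm.injective, card_val_ge]

lemma invNum_insPerm (σ : Equiv.Perm (Fin (M+1))) (d : Fin (M+2)) :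
    invNum (insPerm σ d) = invNum σ + (M + 1 - (d : ℕ)) := by
  classical
  have hsplit : (Finset.univ.filter fun p : Fin (M+2) × Fin (M+2) =>
        p.1 < p.2 ∧ (insPerm σ d) p.2 < (insPerm σ d) p.1)
      = (Finset.univ.filter fun p : Fin (M+1) × Fin (M+1) =>
          p.1 < p.2 ∧ σ p.2 < σ p.1).image (fun p => (p.1.castSucc, p.2.castSucc)) ∪
        (Finset.univ.filter fun x : Fin (M+1) => (d : ℕ) ≤ ((σ x : ℕ))).image
          (fun x => (x.castSucc, Fin.last (M+1))) := by
    ext p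
    obtain ⟨p1, p2⟩ := p
    simp only [mem_union, mem_image, mem_filter, mem_univ, true_and]
    constructor
    · rintro ⟨h1, h2⟩
      rcases Fin.eq_castSucc_or_eq_last p2 with ⟨b', rfl⟩ | rfl
      · have ha : p1 ≠ Fin.last (M+1) := by
          intro e
          rw [e] at h1
          exact absurd (b'.castSucc_lt_last) (not_lt.2 h1.le)
        obtain ⟨a', rfl⟩ := Fin.exists_castSucc_eq.2 ha
        left
        refine ⟨(a', b'), ⟨?_, ?_⟩, rfl⟩
        · exact (Fin.castSucc_lt_castSucc_iff).1 h1
        · rw [insPerm_castSucc, insPerm_castSucc] at h2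
          exact (Fin.succAbove_lt_succAbove_iff).1 h2
      · have ha : p1 ≠ Fin.last (M+1) := h1.ne
        obtain ⟨a', rfl⟩ := Fin.exists_castSucc_eq.2 ha
        right
        refine ⟨a', ?_, rfl⟩
        rw [insPerm_castSucc, insPerm_last] at h2
        have := (Fin.lt_succAbove_iff_le_castSucc d (σ a')).1 h2
        simpa [Fin.le_def] using this
    · rintro (⟨q, ⟨h1, h2⟩, he⟩ | ⟨x, h1, he⟩)
      · obtain ⟨rfl, rfl⟩ : q.1.castSucc = p1 ∧ q.2.castSucc = p2 :=
          ⟨congrArg Prod.fst he, congrArg Prod.snd he⟩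
        constructor
        · exact (Fin.castSucc_lt_castSucc_iff).2 h1
        · rw [insPerm_castSucc, insPerm_castSucc]
          exact (Fin.succAbove_lt_succAbove_iff).2 h2
      · obtain ⟨rfl, rfl⟩ : x.castSucc = p1 ∧ Fin.last (M+1) = p2 :=
          ⟨congrArg Prod.fst he, congrArg Prod.snd he⟩
        constructor
        · exact Fin.castSucc_lt_last x
        · rw [insPerm_castSucc, insPerm_last]
          apply (Fin.lt_succAbove_iff_le_castSucc d (σ x)).2
          simpa [Fin.le_def] using h1
  have hdisj : Disjoint
      ((Finset.univ.filter fun p : Fin (M+1) × Fin (M+1) =>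
          p.1 < p.2 ∧ σ p.2 < σ p.1).image (fun p => (p.1.castSucc, p.2.castSucc)))
      ((Finset.univ.filter fun x : Fin (M+1) => (d : ℕ) ≤ ((σ x : ℕ))).image
          (fun x => (x.castSucc, Fin.last (M+1)))) := by
    rw [Finset.disjoint_left]
    rintro p hp1 hp2
    simp only [mem_image] at hp1 hp2
    obtain ⟨q, _, rfl⟩ := hp1
    obtain ⟨x, _, he⟩ := hp2
    have : (Fin.last (M+1)) = q.2.castSucc := congrArg Prod.snd he
    exact absurd this.symm (Fin.castSucc_lt_last q.2).ne
  have hinj1 : Function.Injective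
      (fun p : Fin (M+1) × Fin (M+1) => (p.1.castSucc, p.2.castSucc)) := by
    intro p q h
    exact Prod.ext (Fin.castSucc_injective _ (congrArg Prod.fst h))
      (Fin.castSucc_injective _ (congrArg Prod.snd h))
  have hinj2 : Function.Injective (fun x : Fin (M+1) => (x.castSucc, Fin.last (M+1))) := by
    intro x y h
    exact Fin.castSucc_injective _ (congrArg Prod.fst h)
  rw [invNum, invNum, hsplit, Finset.card_union_of_disjoint hdisj,
    Finset.card_image_of_injective _ hinj1, Finset.card_image_of_injective _ hinj2,
    card_tail_count]

end Part2
section Part3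

def tri (r : ℕ) : ℕ := ∑ i ∈ Finset.range r, i

lemma tri_succ (r : ℕ) : tri (r+1) = tri r + r := Finset.sum_range_succ _ _

lemma tri_le_sum : ∀ (n : ℕ) (T : Finset ℕ), T.card = n → tri n ≤ ∑ u ∈ T, u := by
  intro n
  induction n with
  | zero => intro T h; simp [tri]
  | succ n ih =>
    intro T h
    have hne : T.Nonempty := Finset.card_pos.1 (by omega)
    set Mx := T.max' hne with hMx
    have hsub : T ⊆ Finset.range (Mx + 1) := by
      intro u hu
      rw [Finset.mem_range]
      exact Nat.lt_succ_of_le (T.le_max' u hu)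
    have hcard : n + 1 ≤ Mx + 1 := by
      have := Finset.card_le_card hsub
      rwa [h, Finset.card_range] at this
    have hMem : Mx ∈ T := T.max'_mem hne
    have hsum : ∑ u ∈ T, u = Mx + ∑ u ∈ T.erase Mx, u := (Finset.add_sum_erase T id hMem).symm
    have hce : (T.erase Mx).card = n := by rw [Finset.card_erase_of_mem hMem, h]; omega
    have h2 := ih (T.erase Mx) hce
    rw [tri_succ, hsum]
    omega

lemma qNum_succ (n : ℕ) : qNum (n+1) = qNum n + X^n := Finset.sum_range_succ _ _

lemma qNum_degree_lt (j : ℕ) : (qNum j).degree < (j : WithBot ℕ) := by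
  apply lt_of_le_of_lt (Polynomial.degree_sum_le _ _)
  rw [Finset.sup_lt_iff (by exact_mod_cast WithBot.bot_lt_coe j)]
  intro i hi
  rw [Polynomial.degree_X_pow]
  exact_mod_cast Finset.mem_range.1 hi

lemma qNum_monic (j : ℕ) : (qNum (j+1)).Monic := by
  rw [qNum_succ, add_comm]
  exact Polynomial.monic_X_pow_add (qNum_degree_lt j)

lemma qFactorial_monic (n : ℕ) : (qFactorial n).Monic := by
  induction n with
  | zero => exact Polynomial.monic_one
  | succ n ih => exact ih.mul (qNum_monic n)

lemma qNum_add (a b : ℕ) : qNum (a + b) = qNum a + X^a * qNum b := by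
  induction b with
  | zero => simp [qNum]
  | succ b ih =>
    rw [show a + (b+1) = (a+b)+1 from rfl, qNum_succ, ih, qNum_succ]
    ring

def Egen (n r : ℕ) : Polynomial ℝ :=
  ∑ T ∈ Finset.powersetCard r (Finset.range n), X^((∑ u ∈ T, u) - tri r)

lemma Egen_zero (n : ℕ) : Egen n 0 = 1 := by
  simp [Egen, Finset.powersetCard_zero, tri]

lemma Egen_top (n : ℕ) : Egen n n = 1 := by
  rw [Egen]
  rw [show Finset.powersetCard n (Finset.range n)
    = Finset.powersetCard (Finset.range n).card (Finset.range n) by rw [Finset.card_range]]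
  rw [Finset.powersetCard_self]
  rw [Finset.sum_singleton]
  have : ∑ u ∈ Finset.range n, u = tri n := rfl
  rw [this, Nat.sub_self, pow_zero]

lemma Egen_eq_zero (n r : ℕ) (h : n < r) : Egen n r = 0 := by
  rw [Egen, Finset.powersetCard_eq_empty.2 (by rwa [Finset.card_range]), Finset.sum_empty]

lemma Egen_pascal (n r : ℕ) (hr : r ≤ n) :
    Egen (n+1) (r+1) = Egen n (r+1) + X^(n-r) * Egen n r := by
  have hnot : n ∉ Finset.range n := by simp
  rw [Egen, Finset.range_add_one, Finset.powersetCard_succ_insert hnot]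
  rw [Finset.sum_union]
  · congr 1
    rw [Finset.sum_image]
    · rw [Egen, Finset.mul_sum]
      apply Finset.sum_congr rfl
      intro T hT
      obtain ⟨hsub, hcard⟩ := Finset.mem_powersetCard.1 hT
      have hnT : n ∉ T := fun h => hnot (hsub h)
      rw [Finset.sum_insert hnT, ← pow_add]
      congr 1
      have h1 : tri r ≤ ∑ u ∈ T, u := tri_le_sum r T hcard
      rw [tri_succ]
      omega
    · intro T hT T' hT' he
      obtain ⟨hsub, _⟩ := Finset.mem_powersetCard.1 hT
      obtain ⟨hsub', _⟩ := Finset.mem_powersetCard.1 hT'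
      have h1 : T = (insert n T).erase n := (Finset.erase_insert (fun h => hnot (hsub h))).symm
      rw [h1, he, Finset.erase_insert (fun h => hnot (hsub' h))]
  · rw [Finset.disjoint_left]
    intro T hT hT'
    obtain ⟨hsub, _⟩ := Finset.mem_powersetCard.1 hT
    obtain ⟨T', hT'', he⟩ := Finset.mem_image.1 hT'
    apply hnot
    apply hsub
    rw [← he]
    exact Finset.mem_insert_self _ _

lemma Egen_mul : ∀ n r : ℕ, r ≤ n → Egen n r * (qFactorial r * qFactorial (n-r)) = qFactorial n := by
  intro n
  induction n with
  | zero =>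
    intro r hr
    interval_cases r
    simp [Egen_zero, qFactorial]
  | succ n ih =>
    intro r hr
    match r with
    | 0 => simp [Egen_zero, qFactorial]
    | r'+1 =>
      rcases eq_or_lt_of_le hr with he | hlt
      · have hr' : r' = n := by omega
        subst hr'
        rw [Egen_top, Nat.sub_self, one_mul]
        show qFactorial (r'+1) * qFactorial 0 = qFactorial (r'+1)
        simp [qFactorial]
      · have hr'n : r' < n := by omega
        have h1 : n + 1 - (r'+1) = n - r' := by omega
        rw [Egen_pascal n r' (by omega), h1, add_mul]
        have e1 : Egen n (r'+1) * (qFactorial (r'+1) * qFactorial (n - r')) =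
            qFactorial n * qNum (n - r') := by
          have h2 : qFactorial (n - r') = qFactorial (n - (r'+1)) * qNum (n - r') := by
            rw [show n - r' = (n - (r'+1)) + 1 by omega]
            rfl
          rw [h2, show Egen n (r'+1) * (qFactorial (r'+1) * (qFactorial (n - (r'+1)) * qNum (n - r')))
            = (Egen n (r'+1) * (qFactorial (r'+1) * qFactorial (n - (r'+1)))) * qNum (n - r') by ring,
            ih (r'+1) (by omega)]
        have e2 : X^(n-r') * Egen n r' * (qFactorial (r'+1) * qFactorial (n - r')) =
            qFactorial n * (X^(n-r') * qNum (r'+1)) := by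
          have h3 : qFactorial (r'+1) = qFactorial r' * qNum (r'+1) := rfl
          rw [h3, show X^(n-r') * Egen n r' * (qFactorial r' * qNum (r'+1) * qFactorial (n - r'))
            = (Egen n r' * (qFactorial r' * qFactorial (n - r'))) * (X^(n-r') * qNum (r'+1)) by ring,
            ih r' (by omega)]
        rw [e1, e2, ← mul_add, ← qNum_add, show (n - r') + (r'+1) = n + 1 by omega]
        rfl

lemma Egen_eq_qBinom (n r : ℕ) (h : r ≤ n) : Egen n r = qBinom n r := by
  have hm : (qFactorial r * qFactorial (n-r)).Monic :=
    (qFactorial_monic r).mul (qFactorial_monic (n-r))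
  rw [qBinom, ← Egen_mul n r h, Polynomial.divByMonic_eq_div _ hm,
    mul_div_cancel_right₀ _ hm.ne_zero]

end Part3

section Part4

lemma Icc_succ_right' (a b : ℕ) (h : a ≤ b + 1) :
    Finset.Icc a (b+1) = insert (b+1) (Finset.Icc a b) := by
  ext x
  simp only [Finset.mem_Icc, Finset.mem_insert]
  omega

def Epoly (m i hi r : ℕ) : Polynomial ℝ :=
  ∑ T ∈ Finset.powersetCard r (Finset.Icc (i+1) hi), X^(∑ u ∈ T, (m - u))

lemma Epoly_zero (m i hi : ℕ) : Epoly m i hi 0 = 1 := by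
  simp [Epoly, Finset.powersetCard_zero]

lemma Epoly_empty (m i hi r : ℕ) (h : hi ≤ i) : Epoly m i hi (r+1) = 0 := by
  rw [Epoly, Finset.powersetCard_eq_empty.2, Finset.sum_empty]
  rw [Finset.Icc_eq_empty (by omega)]
  simp

lemma MD (m i r : ℕ) : ∀ V, V ≤ m →
    ∑ v ∈ Finset.Icc (i+1) V, X^(m-v) * Epoly m i (v-1) r = Epoly m i V (r+1) := by
  intro V
  induction V with
  | zero =>
    intro _
    rw [Finset.Icc_eq_empty (by omega), Finset.sum_empty, Epoly_empty m i 0 r (by omega)]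
  | succ V ih =>
    intro hV
    rcases le_or_gt (i+1) (V+1) with hle | hgt
    · have hnot : V + 1 ∉ Finset.Icc (i+1) V := by simp
      have key : Epoly m i (V+1) (r+1) = Epoly m i V (r+1) + X^(m-(V+1)) * Epoly m i V r := by
        conv_lhs => rw [Epoly]
        rw [Icc_succ_right' _ _ hle, Finset.powersetCard_succ_insert hnot,
          Finset.sum_union, Finset.sum_image]
        · have h2 : ∑ T ∈ Finset.powersetCard r (Finset.Icc (i+1) V),
              (X : Polynomial ℝ)^(∑ u ∈ insert (V+1) T, (m - u))
              = X^(m-(V+1)) * Epoly m i V r := by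
            rw [Epoly, Finset.mul_sum]
            apply Finset.sum_congr rfl
            intro T hT
            obtain ⟨hsub, _⟩ := Finset.mem_powersetCard.1 hT
            have hnT : V+1 ∉ T := fun hc => hnot (hsub hc)
            rw [Finset.sum_insert hnT, pow_add]
          rw [h2]
          rfl
        · intro T hT T' hT' he
          obtain ⟨hsub, _⟩ := Finset.mem_powersetCard.1 hT
          obtain ⟨hsub', _⟩ := Finset.mem_powersetCard.1 hT'
          have h1 : T = (insert (V+1) T).erase (V+1) :=
            (Finset.erase_insert (fun hc => hnot (hsub hc))).symm
          rw [h1, he, Finset.erase_insert (fun hc => hnot (hsub' hc))]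
        · rw [Finset.disjoint_left]
          intro T hT hT'
          obtain ⟨hsub, _⟩ := Finset.mem_powersetCard.1 hT
          obtain ⟨T', _, he⟩ := Finset.mem_image.1 hT'
          apply hnot
          apply hsub
          rw [← he]
          exact Finset.mem_insert_self _ _
      rw [Icc_succ_right' _ _ hle, Finset.sum_insert (by simp), ih (by omega),
        Nat.add_sub_cancel, key]
      ring
    · rw [Finset.Icc_eq_empty (by omega), Finset.sum_empty, Epoly_empty m i _ r (by omega)]

lemma Epoly_eq (m i r : ℕ) : Epoly m i m r = X^(tri r) * Egen (m-i) r := by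
  rw [Egen, Finset.mul_sum, Epoly]
  rw [Finset.sum_bij' (s := Finset.powersetCard r (Finset.Icc (i+1) m))
    (t := Finset.powersetCard r (Finset.range (m-i)))
    (i := fun T _ => T.image (fun u => m - u)) (j := fun T' _ => T'.image (fun s => m - s))
    (hi := ?_) (hj := ?_) (left_neg := ?_) (right_neg := ?_) (h := ?_)]
  · intro T hT
    obtain ⟨hsub, hcard⟩ := Finset.mem_powersetCard.1 hT
    rw [Finset.mem_powersetCard]
    constructor
    · intro s hs
      obtain ⟨u, hu, rfl⟩ := Finset.mem_image.1 hs
      have := Finset.mem_Icc.1 (hsub hu)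
      rw [Finset.mem_range]
      omega
    · rw [Finset.card_image_of_injOn, hcard]
      intro u hu u' hu' he
      have h1 := Finset.mem_Icc.1 (hsub hu)
      have h2 := Finset.mem_Icc.1 (hsub hu')
      dsimp only at he
      omega
  · intro T' hT'
    obtain ⟨hsub, hcard⟩ := Finset.mem_powersetCard.1 hT'
    rw [Finset.mem_powersetCard]
    constructor
    · intro u hu
      obtain ⟨s, hs, rfl⟩ := Finset.mem_image.1 hu
      have := Finset.mem_range.1 (hsub hs)
      rw [Finset.mem_Icc]
      omega
    · rw [Finset.card_image_of_injOn, hcard]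
      intro s hs s' hs' he
      have h1 := Finset.mem_range.1 (hsub hs)
      have h2 := Finset.mem_range.1 (hsub hs')
      simp only at he
      omega
  · intro T hT
    obtain ⟨hsub, _⟩ := Finset.mem_powersetCard.1 hT
    rw [Finset.image_image]
    have : ∀ u ∈ T, ((fun s => m - s) ∘ (fun u => m - u)) u = id u := by
      intro u hu
      have := Finset.mem_Icc.1 (hsub hu)
      simp only [Function.comp_apply, id_eq]
      omega
    rw [Finset.image_congr this, Finset.image_id]
  · intro T' hT'
    obtain ⟨hsub, _⟩ := Finset.mem_powersetCard.1 hT'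
    rw [Finset.image_image]
    have : ∀ s ∈ T', ((fun u => m - u) ∘ (fun s => m - s)) s = id s := by
      intro s hs
      have := Finset.mem_range.1 (hsub hs)
      simp only [Function.comp_apply, id_eq]
      omega
    rw [Finset.image_congr this, Finset.image_id]
  · intro T hT
    obtain ⟨hsub, hcard⟩ := Finset.mem_powersetCard.1 hT
    have hinj : ∀ u ∈ T, ∀ u' ∈ T, m - u = m - u' → u = u' := by
      intro u hu u' hu' he
      have h1 := Finset.mem_Icc.1 (hsub hu)
      have h2 := Finset.mem_Icc.1 (hsub hu')
      omega
    rw [Finset.sum_image hinj]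
    rw [← pow_add]
    congr 1
    have hc : (T.image (fun u => m - u)).card = r := by
      rw [Finset.card_image_of_injOn, hcard]
      intro u hu u' hu' he
      exact hinj u hu u' hu' he
    have := tri_le_sum r (T.image (fun u => m - u)) hc
    rw [Finset.sum_image hinj] at this
    omega

end Part4

section Part5

variable (S : Finset ℕ) (m : ℕ)

def ASum (r : ℕ) : Polynomial ℝ :=
  ∑ π ∈ Finset.univ.filter (fun π : Equiv.Perm (Fin (m+r+1)) =>
    DesSet π = S ∧ ∀ u ∈ Finset.Icc (m+1) (m+r+1),
      ∃ i : Fin (m+r+1), (i : ℕ) < m ∧ (π i : ℕ) + 1 = u), X ^ invNum π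

def AvP (r v : ℕ) : Polynomial ℝ :=
  ∑ π ∈ Finset.univ.filter (fun π : Equiv.Perm (Fin (m+r+1)) =>
    (DesSet π = S ∧ ∀ u ∈ Finset.Icc (m+1) (m+r+1),
      ∃ i : Fin (m+r+1), (i : ℕ) < m ∧ (π i : ℕ) + 1 = u)
      ∧ (π (Fin.last (m+r)) : ℕ) + 1 = v), X ^ invNum π

def BSum (v : ℕ) : Polynomial ℝ :=
  ∑ π ∈ Finset.univ.filter (fun π : Equiv.Perm (Fin (m + 1)) =>
      DesSet π = S ∧ (π (Fin.last m) : ℕ) + 1 = v), X ^ invNum π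

lemma last_lt_of_pred {r : ℕ} {π : Equiv.Perm (Fin (m+r+1))}
    (h : ∀ u ∈ Finset.Icc (m+1) (m+r+1),
      ∃ i : Fin (m+r+1), (i : ℕ) < m ∧ (π i : ℕ) + 1 = u) :
    (π (Fin.last (m+r)) : ℕ) < m := by
  by_contra hc
  push_neg at hc
  obtain ⟨i, him, hival⟩ := h ((π (Fin.last (m+r)) : ℕ) + 1) (by
    rw [Finset.mem_Icc]
    have := (π (Fin.last (m+r))).isLt
    omega)
  have h2 : π i = π (Fin.last (m+r)) := Fin.ext (by omega)
  have hil : i = Fin.last (m+r) := π.injective h2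
  rw [hil] at him
  simp only [Fin.val_last] at him
  omega

lemma ASum_eq (r : ℕ) : ASum S m r = ∑ v ∈ Finset.Icc 1 m, AvP S m r v := by
  rw [ASum, ← Finset.sum_fiberwise_of_maps_to (g := fun π : Equiv.Perm (Fin (m+r+1)) =>
    (π (Fin.last (m+r)) : ℕ) + 1) (t := Finset.Icc 1 m) ?mapsto
    (fun π => (X : Polynomial ℝ) ^ invNum π)]
  case mapsto =>
    intro π hπ
    rw [Finset.mem_filter] at hπ
    simp only [Finset.mem_Icc]
    have := last_lt_of_pred m hπ.2.2
    omega
  apply Finset.sum_congr rfl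
  intro v _
  rw [AvP, Finset.filter_filter]

lemma AvP_zero (v : ℕ) (hv1 : 1 ≤ v) (hvm : v ≤ m) : AvP S m 0 v = BSum S m v := by
  rw [AvP, BSum]
  apply Finset.sum_congr _ (fun _ _ => rfl)
  apply Finset.filter_congr
  intro π _
  constructor
  · rintro ⟨⟨h1, _⟩, h2⟩
    exact ⟨h1, h2⟩
  · rintro ⟨h1, h2⟩
    refine ⟨⟨h1, ?_⟩, h2⟩
    intro u hu
    rw [Finset.mem_Icc] at hu
    have hu1 : u = m + 1 := by omega
    refine ⟨π.symm (Fin.last m), ?_, ?_⟩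
    · have hne : π.symm (Fin.last m) ≠ Fin.last m := by
        intro he
        have h3 : π (Fin.last m) = Fin.last m := by
          conv_lhs => rw [← he]
          exact π.apply_symm_apply _
        rw [h3] at h2
        simp only [Fin.val_last] at h2
        omega
      have := Fin.val_lt_last hne
      omega
    · rw [Equiv.apply_symm_apply]
      simp only [Fin.val_last]
      omega

lemma step_lemma (hSm : ∀ s ∈ S, s ≤ m) (hm1 : 1 ≤ m) (r v : ℕ) (hv1 : 1 ≤ v) (hvm : v ≤ m) :
    AvP S m (r+1) v = X ^ (m+r+2-v) * ∑ w ∈ Finset.Icc 1 (v-1), AvP S m r w := by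
  have hd : v - 1 < m + r + 2 := by omega
  obtain ⟨d, hdval⟩ : ∃ d : Fin (m+r+2), (d : ℕ) = v - 1 := ⟨⟨v-1, hd⟩, rfl⟩
  have hAvP : AvP S m (r+1) v = ∑ π ∈ Finset.univ.filter
      (fun π : Equiv.Perm (Fin (m+r+2)) =>
        (DesSet π = S ∧ ∀ u ∈ Finset.Icc (m+1) (m+r+2),
          ∃ i : Fin (m+r+2), (i : ℕ) < m ∧ (π i : ℕ) + 1 = u)
        ∧ (π (Fin.last (m+r+1)) : ℕ) + 1 = v), X ^ invNum π := rfl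
  have hB : ∑ w ∈ Finset.Icc 1 (v-1), AvP S m r w
      = ∑ σ ∈ Finset.univ.filter (fun σ : Equiv.Perm (Fin (m+r+1)) =>
          (DesSet σ = S ∧ ∀ u ∈ Finset.Icc (m+1) (m+r+1),
            ∃ i : Fin (m+r+1), (i : ℕ) < m ∧ (σ i : ℕ) + 1 = u)
          ∧ (σ (Fin.last (m+r)) : ℕ) + 1 < v), X ^ invNum σ := by
    rw [← Finset.sum_fiberwise_of_maps_to (g := fun σ : Equiv.Perm (Fin (m+r+1)) =>
      (σ (Fin.last (m+r)) : ℕ) + 1) (t := Finset.Icc 1 (v-1)) ?mapsto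
      (fun σ => (X : Polynomial ℝ) ^ invNum σ)]
    case mapsto =>
      intro σ hσ
      rw [Finset.mem_filter] at hσ
      simp only [Finset.mem_Icc]
      have := hσ.2.2
      omega
    apply Finset.sum_congr rfl
    intro w hw
    rw [Finset.mem_Icc] at hw
    rw [AvP, Finset.filter_filter]
    apply Finset.sum_congr _ (fun _ _ => rfl)
    apply Finset.filter_congr
    intro σ _
    constructor
    · rintro ⟨h1, h2⟩
      exact ⟨⟨h1, by omega⟩, h2⟩
    · rintro ⟨⟨h1, _⟩, h2⟩
      exact ⟨h1, h2⟩
  rw [hAvP, hB, Finset.mul_sum]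
  apply Finset.sum_bij' (i := fun (π : Equiv.Perm (Fin (m+r+2))) _ => delPerm π)
    (j := fun (σ : Equiv.Perm (Fin (m+r+1))) _ => insPerm σ d)
  -- hi : membership forward (delete)
  · intro π hπ
    rw [Finset.mem_filter] at hπ
    obtain ⟨-, ⟨hdes, htop⟩, hlast⟩ := hπ
    have hπd : π (Fin.last (m+r+1)) = d := Fin.ext (by rw [hdval]; omega)
    set σ := delPerm π with hσdef
    have hins : insPerm σ d = π := by rw [hσdef, ← hπd]; exact insPerm_delPerm π
    have hasc : π ((Fin.last (m+r)).castSucc) < π (Fin.last (m+r+1)) := by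
      apply not_descent π _ _ (by simp)
      rw [hdes]
      intro hc
      have := hSm _ hc
      simp only [Fin.coe_castSucc, Fin.val_last] at this
      omega
    have hcs : (σ (Fin.last (m+r))).castSucc < d := by
      have h1 : π ((Fin.last (m+r)).castSucc) = d.succAbove (σ (Fin.last (m+r))) := by
        conv_lhs => rw [← hins]
        rw [insPerm_castSucc]
      rw [h1, hπd] at hasc
      exact (Fin.succAbove_lt_iff_castSucc_lt d _).1 hasc
    have hcsval : (σ (Fin.last (m+r)) : ℕ) < v - 1 := by
      have h2 := Fin.lt_def.1 hcs
      simp only [Fin.coe_castSucc] at h2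
      omega
    rw [Finset.mem_filter]
    refine ⟨Finset.mem_univ _, ⟨?_, ?_⟩, ?_⟩
    · have h3 := DesSet_insPerm σ d hcs
      rw [hins] at h3
      rw [← h3, hdes]
    · intro u hu
      rw [Finset.mem_Icc] at hu
      obtain ⟨i, him, hival⟩ := htop (u+1) (by rw [Finset.mem_Icc]; omega)
      have hine : i ≠ Fin.last (m+r+1) := by
        intro he
        rw [he] at him
        simp only [Fin.val_last] at him
        omega
      obtain ⟨i', rfl⟩ := Fin.exists_castSucc_eq.2 hine
      have hval : π i'.castSucc = d.succAbove (σ i') := by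
        conv_lhs => rw [← hins]
        rw [insPerm_castSucc]
      refine ⟨i', by simpa using him, ?_⟩
      rcases lt_or_ge ((σ i').castSucc) d with hlt | hle
      · exfalso
        rw [Fin.succAbove_of_castSucc_lt _ _ hlt] at hval
        rw [hval] at hival
        simp only [Fin.coe_castSucc] at hival
        have h4 := Fin.lt_def.1 hlt
        simp only [Fin.coe_castSucc] at h4
        omega
      · rw [Fin.succAbove_of_le_castSucc _ _ hle] at hval
        rw [hval] at hival
        simp only [Fin.val_succ] at hival
        omega
    · omega
  -- hj : membership backward (insert)
  · intro σ hσ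
    rw [Finset.mem_filter] at hσ
    obtain ⟨-, ⟨hdes, htop⟩, hlast⟩ := hσ
    have hcs : (σ (Fin.last (m+r))).castSucc < d := by
      rw [Fin.lt_def]
      simp only [Fin.coe_castSucc, hdval]
      omega
    rw [Finset.mem_filter]
    refine ⟨Finset.mem_univ _, ⟨?_, ?_⟩, ?_⟩
    · rw [DesSet_insPerm σ d hcs, hdes]
    · intro u hu
      rw [Finset.mem_Icc] at hu
      rcases eq_or_lt_of_le hu.1 with he | hlt2
      · -- u = m+1 : find position of 0-indexed value m
        set p := σ.symm ⟨m-1, by omega⟩ with hp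
        have hσp : σ p = ⟨m-1, by omega⟩ := σ.apply_symm_apply _
        have hpm : (p : ℕ) < m := by
          by_contra hc
          push_neg at hc
          have h2 := tail_le σ hdes hSm p hc
          rw [hσp] at h2
          have h3 := Fin.le_def.1 h2
          simp only at h3
          omega
        refine ⟨p.castSucc, by simpa using hpm, ?_⟩
        rw [insPerm_castSucc, hσp]
        rw [Fin.succAbove_of_le_castSucc]
        · simp only [Fin.val_succ]
          omega
        · rw [Fin.le_def]
          simp only [Fin.coe_castSucc, hdval]
          omega
      · -- u ≥ m+2
        obtain ⟨i, him, hival⟩ := htop (u-1) (by rw [Finset.mem_Icc]; omega)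
        refine ⟨i.castSucc, by simpa using him, ?_⟩
        rw [insPerm_castSucc]
        rw [Fin.succAbove_of_le_castSucc]
        · simp only [Fin.val_succ]
          omega
        · rw [Fin.le_def]
          simp only [Fin.coe_castSucc, hdval]
          omega
    · rw [insPerm_last, hdval]
      omega
  -- left inverse
  · intro π hπ
    rw [Finset.mem_filter] at hπ
    have hlast := hπ.2.2
    have hπd : π (Fin.last (m+r+1)) = d := Fin.ext (by rw [hdval]; omega)
    show insPerm (delPerm π) d = π
    rw [← hπd]
    exact insPerm_delPerm π
  -- right inverse
  · intro σ _
    exact delPerm_insPerm σ d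
  -- values
  · intro π hπ
    rw [Finset.mem_filter] at hπ
    have hlast := hπ.2.2
    have hπd : π (Fin.last (m+r+1)) = d := Fin.ext (by rw [hdval]; omega)
    show (X : Polynomial ℝ) ^ invNum π = X ^ (m+r+2-v) * X ^ invNum (delPerm π)
    have h1 : invNum π = invNum (delPerm π) + (m + r + 1 - (d : ℕ)) := by
      conv_lhs => rw [show π = insPerm (delPerm π) d by
        rw [← hπd]; exact (insPerm_delPerm π).symm]
      exact invNum_insPerm (delPerm π) d
    rw [h1, pow_add]
    have h2 : m + r + 1 - (d : ℕ) = m + r + 2 - v := by rw [hdval]; omega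
    rw [h2]
    ring

end Part5

section Part6

lemma sum_swap_tri {β : Type*} [AddCommMonoid β] (V : ℕ) (F : ℕ → ℕ → β) :
    ∑ v ∈ Finset.Icc 1 V, ∑ i ∈ Finset.Icc 1 (v-1), F i v
      = ∑ i ∈ Finset.Icc 1 V, ∑ v ∈ Finset.Icc (i+1) V, F i v := by
  have h1 : ∀ v ∈ Finset.Icc 1 V, ∑ i ∈ Finset.Icc 1 (v-1), F i v
      = ∑ i ∈ Finset.Icc 1 V, if i + 1 ≤ v then F i v else 0 := by
    intro v hv
    rw [Finset.mem_Icc] at hv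
    rw [← Finset.sum_filter]
    congr 1
    ext x
    simp only [Finset.mem_Icc, Finset.mem_filter]
    omega
  rw [Finset.sum_congr rfl h1, Finset.sum_comm]
  apply Finset.sum_congr rfl
  intro i hi
  rw [Finset.mem_Icc] at hi
  rw [← Finset.sum_filter]
  congr 1
  ext x
  simp only [Finset.mem_Icc, Finset.mem_filter]
  omega

lemma tri_c (r : ℕ) : tri r + 2*r + tri r = (r+1)*r := by
  cases r with
  | zero => simp [tri]
  | succ r' =>
    have ht : tri (r'+1) * 2 = (r'+1) * ((r'+1)-1) := Finset.sum_range_id_mul_two (r'+1)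
    simp only [Nat.add_sub_cancel] at ht
    have hr : ((r'+1)+1)*(r'+1) = (r'+1)*r' + 2*(r'+1) := by ring
    linarith [ht, hr]

lemma MAIN (S : Finset ℕ) (m : ℕ) (hSm : ∀ s ∈ S, s ≤ m) (hm1 : 1 ≤ m) :
    ∀ r V, V ≤ m → ∑ v ∈ Finset.Icc 1 V, AvP S m r v
      = X ^ (tri r + 2*r) * ∑ i ∈ Finset.Icc 1 V, Epoly m i V r * BSum S m i := by
  intro r
  induction r with
  | zero =>
    intro V hV
    rw [show tri 0 + 2*0 = 0 from rfl, pow_zero, one_mul]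
    apply Finset.sum_congr rfl
    intro v hv
    rw [Finset.mem_Icc] at hv
    rw [Epoly_zero, one_mul]
    exact AvP_zero S m v (by omega) (by omega)
  | succ r ih =>
    intro V hV
    have hstep : ∀ v ∈ Finset.Icc 1 V, AvP S m (r+1) v
        = ∑ i ∈ Finset.Icc 1 (v-1),
            (X^(m+r+2-v) * X^(tri r + 2*r)) * (Epoly m i (v-1) r * BSum S m i) := by
      intro v hv
      rw [Finset.mem_Icc] at hv
      rw [step_lemma S m hSm hm1 r v (by omega) (by omega), ih (v-1) (by omega),
        ← mul_assoc, Finset.mul_sum]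
    rw [Finset.sum_congr rfl hstep, sum_swap_tri, Finset.mul_sum]
    apply Finset.sum_congr rfl
    intro i hi
    rw [Finset.mem_Icc] at hi
    have h2 : ∀ v ∈ Finset.Icc (i+1) V,
        (X^(m+r+2-v) * X^(tri r + 2*r)) * (Epoly m i (v-1) r * BSum S m i)
          = ((X : Polynomial ℝ)^(tri r + 2*r + (r+2)) * BSum S m i)
              * (X^(m-v) * Epoly m i (v-1) r) := by
      intro v hv
      rw [Finset.mem_Icc] at hv
      rw [show m+r+2-v = (r+2) + (m-v) by omega, pow_add, pow_add, pow_add]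
      ring
    rw [Finset.sum_congr rfl h2, ← Finset.mul_sum, MD m i r V hV]
    rw [show tri (r+1) + 2*(r+1) = tri r + 2*r + (r+2) by rw [tri_succ]; omega]
    ring

end Part6

/-- relation between the coefficients `a_k(S;q)` and `b_i(S;q)`:
`a_k(S;q) = q^{k(k-1)} Σ_{i=1}^{m-k+1} [m-i choose k-1]_q b_i(S;q)`. -/
theorem stmt8 (S : Finset ℕ) (hS : S.Nonempty) (hpos : ∀ s ∈ S, 0 < s)
    (m : ℕ) (hm : m = S.max' hS)
    (a b : ℕ → Polynomial ℝ)
    (ha : ∀ j, 1 ≤ j → j ≤ m →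
      a j = ∑ π ∈ Finset.univ.filter (fun π : Equiv.Perm (Fin (m + j)) =>
          DesSet π = S ∧ ∀ v ∈ Finset.Icc (m + 1) (m + j),
            ∃ i : Fin (m + j), (i : ℕ) < m ∧ (π i : ℕ) + 1 = v),
        X ^ invNum π)
    (hb : ∀ j, 1 ≤ j → j ≤ m →
      b j = ∑ π ∈ Finset.univ.filter (fun π : Equiv.Perm (Fin (m + 1)) =>
          DesSet π = S ∧ (π (Fin.last m) : ℕ) + 1 = j),
        X ^ invNum π)
    (k : ℕ) (hk1 : 1 ≤ k) (hk2 : k ≤ m) :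
    a k = X ^ (k * (k - 1)) *
      ∑ i ∈ Finset.Icc 1 (m - k + 1), qBinom (m - i) (k - 1) * b i := by
  have hSm : ∀ s ∈ S, s ≤ m := by
    intro s hs
    rw [hm]
    exact S.le_max' s hs
  obtain ⟨r, rfl⟩ : ∃ r, k = r + 1 := ⟨k - 1, by omega⟩
  have hm1 : 1 ≤ m := le_trans hk1 hk2
  have h0 : a (r+1) = ASum S m r := by
    rw [ha (r+1) hk1 hk2]
    rfl
  rw [h0, ASum_eq, MAIN S m hSm hm1 r m le_rfl]
  simp only [Nat.add_sub_cancel]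
  rw [show m - (r+1) + 1 = m - r by omega]
  have e1 : ∀ i ∈ Finset.Icc 1 m, Epoly m i m r * BSum S m i
      = X^(tri r) * (Egen (m-i) r * BSum S m i) := by
    intro i _
    rw [Epoly_eq]
    ring
  rw [Finset.sum_congr rfl e1, ← Finset.mul_sum, ← mul_assoc, ← pow_add,
    show tri r + 2*r + tri r = (r+1)*r from tri_c r]
  congr 1
  have hsub : Finset.Icc 1 (m - r) ⊆ Finset.Icc 1 m := by
    intro x hx
    rw [Finset.mem_Icc] at *
    omega
  have hzero : ∀ i ∈ Finset.Icc 1 m, i ∉ Finset.Icc 1 (m - r) →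
      Egen (m-i) r * BSum S m i = 0 := by
    intro i hi hni
    rw [Finset.mem_Icc] at hi
    rw [Finset.mem_Icc] at hni
    rw [Egen_eq_zero (m-i) r (by omega), zero_mul]
  rw [← Finset.sum_subset hsub hzero]
  apply Finset.sum_congr rfl
  intro i hi
  rw [Finset.mem_Icc] at hi
  rw [Egen_eq_qBinom (m-i) r (by omega), hb i (by omega) (by omega)]
  rfl

end
end

section
/- For every integer n ≥ 1, the generating polynomial Σ q^{ℓ(π)} over all π ∈ S_n with empty peak set equals (−q;q)_{n−1} = (1+q)(1+q^2)⋯(1+q^{n−1}). -/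
open Polynomial Finset

noncomputable section

section aux10

/-- No-peak predicate. -/
def NoPeak {n : ℕ} (π : Equiv.Perm (Fin n)) : Prop :=
  ∀ a b c : Fin n, (a : ℕ) + 1 = (b : ℕ) → (b : ℕ) + 1 = (c : ℕ) →
    ¬(π a < π b ∧ π c < π b)

lemma peakSet_eq_empty_iff {n : ℕ} (π : Equiv.Perm (Fin n)) :
    PeakSet π = ∅ ↔ NoPeak π := by
  unfold PeakSet NoPeak
  rw [Finset.image_eq_empty, Finset.filter_eq_empty_iff]
  constructor
  · intro h a b c hab hbc hcon
    exact h (Finset.mem_univ b) ⟨a, c, hab, hbc, hcon.1, hcon.2⟩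
  · rintro h b - ⟨a, c, hab, hbc, h1, h2⟩
    exact h a b c hab hbc ⟨h1, h2⟩

/-- Extend a permutation of `Fin n` to `Fin (n+1)` fixing the last element. -/
def e0 {n : ℕ} (σ : Equiv.Perm (Fin n)) : Equiv.Perm (Fin (n + 1)) where
  toFun := Fin.lastCases (Fin.last n) (fun j => (σ j).castSucc)
  invFun := Fin.lastCases (Fin.last n) (fun j => (σ⁻¹ j).castSucc)
  left_inv := by
    intro i
    induction i using Fin.lastCases with
    | last => simp
    | cast j => simp
  right_inv := by
    intro i
    induction i using Fin.lastCases with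
    | last => simp
    | cast j => simp

@[simp] lemma e0_castSucc {n : ℕ} (σ : Equiv.Perm (Fin n)) (j : Fin n) :
    e0 σ j.castSucc = (σ j).castSucc := by
  simp only [e0, Equiv.coe_fn_mk, Fin.lastCases_castSucc]

@[simp] lemma e0_last {n : ℕ} (σ : Equiv.Perm (Fin n)) :
    e0 σ (Fin.last n) = Fin.last n := by
  simp only [e0, Equiv.coe_fn_mk, Fin.lastCases_last]

/-- Extend a permutation of `Fin n` to `Fin (n+1)` sending `0` to the last element. -/
def e1 {n : ℕ} (σ : Equiv.Perm (Fin n)) : Equiv.Perm (Fin (n + 1)) where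
  toFun := Fin.cases (Fin.last n) (fun j => (σ j).castSucc)
  invFun := Fin.lastCases 0 (fun j => (σ⁻¹ j).succ)
  left_inv := by
    intro i
    induction i using Fin.cases with
    | zero => simp
    | succ j => simp
  right_inv := by
    intro i
    induction i using Fin.lastCases with
    | last => simp
    | cast j => simp

@[simp] lemma e1_zero {n : ℕ} (σ : Equiv.Perm (Fin n)) :
    e1 σ 0 = Fin.last n := by
  simp only [e1, Equiv.coe_fn_mk, Fin.cases_zero]

@[simp] lemma e1_succ {n : ℕ} (σ : Equiv.Perm (Fin n)) (j : Fin n) :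
    e1 σ j.succ = (σ j).castSucc := by
  simp only [e1, Equiv.coe_fn_mk, Fin.cases_succ]

end aux10
section aux10b

lemma e0_injective {n : ℕ} : Function.Injective (e0 (n := n)) := by
  intro σ τ h
  ext j
  have h' : e0 σ j.castSucc = e0 τ j.castSucc := by rw [h]
  rw [e0_castSucc, e0_castSucc] at h'
  exact congrArg Fin.val (Fin.castSucc_injective _ h')

lemma e1_injective {n : ℕ} : Function.Injective (e1 (n := n)) := by
  intro σ τ h
  ext j
  have h' : e1 σ j.succ = e1 τ j.succ := by rw [h]
  rw [e1_succ, e1_succ] at h'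
  exact congrArg Fin.val (Fin.castSucc_injective _ h')

lemma invNum_e0 {n : ℕ} (σ : Equiv.Perm (Fin n)) : invNum (e0 σ) = invNum σ := by
  unfold invNum
  rw [show (Finset.univ.filter fun p : Fin (n+1) × Fin (n+1) =>
        p.1 < p.2 ∧ e0 σ p.2 < e0 σ p.1)
      = (Finset.univ.filter fun p : Fin n × Fin n =>
          p.1 < p.2 ∧ σ p.2 < σ p.1).image
            (fun p => (p.1.castSucc, p.2.castSucc)) from ?_]
  · exact Finset.card_image_of_injective _ (by
      intro p q h
      simp only [Prod.ext_iff] at h ⊢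
      exact ⟨Fin.castSucc_injective _ h.1, Fin.castSucc_injective _ h.2⟩)
  · ext ⟨p, q⟩
    simp only [Finset.mem_filter, Finset.mem_univ, true_and, Finset.mem_image, Prod.ext_iff]
    constructor
    · rintro ⟨hlt, hinv⟩
      have hq : q ≠ Fin.last n := by
        intro h; rw [h, e0_last] at hinv; exact absurd hinv (Fin.le_last _).not_gt
      have hp : p ≠ Fin.last n := by
        intro h; rw [h] at hlt; exact absurd hlt (Fin.le_last _).not_gt
      rw [← Fin.castSucc_castPred p hp, ← Fin.castSucc_castPred q hq] at hlt hinv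
      rw [e0_castSucc, e0_castSucc, Fin.castSucc_lt_castSucc_iff] at hinv
      rw [Fin.castSucc_lt_castSucc_iff] at hlt
      exact ⟨(p.castPred hp, q.castPred hq), ⟨hlt, hinv⟩,
        Fin.castSucc_castPred p hp, Fin.castSucc_castPred q hq⟩
    · rintro ⟨⟨i, j⟩, ⟨hij, hσ⟩, rfl, rfl⟩
      refine ⟨Fin.castSucc_lt_castSucc_iff.mpr hij, ?_⟩
      rw [e0_castSucc, e0_castSucc]
      exact Fin.castSucc_lt_castSucc_iff.mpr hσ

lemma invNum_e1 {n : ℕ} (σ : Equiv.Perm (Fin n)) : invNum (e1 σ) = n + invNum σ := by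
  unfold invNum
  rw [← Finset.card_filter_add_card_filter_not
    (s := Finset.univ.filter fun p : Fin (n+1) × Fin (n+1) =>
      p.1 < p.2 ∧ e1 σ p.2 < e1 σ p.1) (p := fun p => p.1 = 0)]
  congr 1
  · rw [Finset.filter_filter]
    rw [show (Finset.univ.filter fun p : Fin (n+1) × Fin (n+1) =>
          (p.1 < p.2 ∧ e1 σ p.2 < e1 σ p.1) ∧ p.1 = 0)
        = Finset.univ.image (fun j : Fin n => ((0 : Fin (n+1)), j.succ)) from ?_]
    · rw [Finset.card_image_of_injective _ (by
        intro i j h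
        simpa [Prod.ext_iff] using h), Finset.card_univ, Fintype.card_fin]
    · ext ⟨p, q⟩
      simp only [Finset.mem_filter, Finset.mem_univ, true_and, Finset.mem_image, Prod.ext_iff]
      constructor
      · rintro ⟨⟨hlt, hinv⟩, rfl⟩
        have hq : q ≠ 0 := hlt.ne'
        exact ⟨q.pred hq, rfl, Fin.succ_pred q hq⟩
      · rintro ⟨j, rfl, rfl⟩
        refine ⟨⟨Fin.succ_pos j, ?_⟩, rfl⟩
        rw [e1_succ, e1_zero]
        exact Fin.castSucc_lt_last _
  · rw [Finset.filter_filter]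
    rw [show (Finset.univ.filter fun p : Fin (n+1) × Fin (n+1) =>
          (p.1 < p.2 ∧ e1 σ p.2 < e1 σ p.1) ∧ ¬p.1 = 0)
        = (Finset.univ.filter fun p : Fin n × Fin n =>
            p.1 < p.2 ∧ σ p.2 < σ p.1).image
              (fun p => (p.1.succ, p.2.succ)) from ?_]
    · exact Finset.card_image_of_injective _ (by
        intro p q h
        simp only [Prod.ext_iff] at h ⊢
        exact ⟨Fin.succ_injective _ h.1, Fin.succ_injective _ h.2⟩)
    · ext ⟨p, q⟩
      simp only [Finset.mem_filter, Finset.mem_univ, true_and, Finset.mem_image, Prod.ext_iff]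
      constructor
      · rintro ⟨⟨hlt, hinv⟩, hp⟩
        have hq : q ≠ 0 := Fin.pos_iff_ne_zero.mp (lt_of_le_of_lt (Fin.zero_le p) hlt)
        rw [← Fin.succ_pred p hp, ← Fin.succ_pred q hq] at hlt hinv
        rw [e1_succ, e1_succ, Fin.castSucc_lt_castSucc_iff] at hinv
        rw [Fin.succ_lt_succ_iff] at hlt
        exact ⟨(p.pred hp, q.pred hq), ⟨hlt, hinv⟩, Fin.succ_pred p hp, Fin.succ_pred q hq⟩
      · rintro ⟨⟨i, j⟩, ⟨hij, hσ⟩, rfl, rfl⟩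
        refine ⟨⟨Fin.succ_lt_succ_iff.mpr hij, ?_⟩, Fin.succ_ne_zero i⟩
        rw [e1_succ, e1_succ]
        exact Fin.castSucc_lt_castSucc_iff.mpr hσ

end aux10b
section aux10c

lemma noPeak_e0_iff {n : ℕ} (σ : Equiv.Perm (Fin n)) : NoPeak (e0 σ) ↔ NoPeak σ := by
  constructor
  · intro h a b c hab hbc hcon
    refine h a.castSucc b.castSucc c.castSucc (by simpa) (by simpa) ?_
    simp only [e0_castSucc, Fin.castSucc_lt_castSucc_iff]
    exact hcon
  · intro h a b c hab hbc hcon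
    have hc : c ≠ Fin.last n := by
      intro hc; rw [hc, e0_last] at hcon
      exact absurd hcon.2 (Fin.le_last _).not_gt
    have hcv : (c : ℕ) ≠ n := fun hv => hc (Fin.ext hv)
    have hb : b ≠ Fin.last n := by
      intro hbl
      have : (b : ℕ) = n := by rw [hbl]; rfl
      have := c.isLt
      omega
    have hbv : (b : ℕ) ≠ n := fun hv => hb (Fin.ext hv)
    have ha : a ≠ Fin.last n := by
      intro hal
      have : (a : ℕ) = n := by rw [hal]; rfl
      have := b.isLt
      omega
    rw [← Fin.castSucc_castPred a ha, ← Fin.castSucc_castPred b hb,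
      ← Fin.castSucc_castPred c hc] at hcon
    simp only [e0_castSucc, Fin.castSucc_lt_castSucc_iff] at hcon
    exact h _ _ _ (by simpa using hab) (by simpa using hbc) hcon

lemma noPeak_e1_iff {n : ℕ} (σ : Equiv.Perm (Fin n)) : NoPeak (e1 σ) ↔ NoPeak σ := by
  constructor
  · intro h a b c hab hbc hcon
    refine h a.succ b.succ c.succ (by simp [Fin.val_succ]; omega) (by simp [Fin.val_succ]; omega) ?_
    simp only [e1_succ, Fin.castSucc_lt_castSucc_iff]
    exact hcon
  · intro h a b c hab hbc hcon
    by_cases ha : a = 0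
    · rw [ha, e1_zero] at hcon
      exact absurd hcon.1 (Fin.le_last _).not_gt
    · have hav : (a : ℕ) ≠ 0 := fun hv => ha (Fin.ext hv)
      have hb : b ≠ 0 := by
        intro hb0
        have : (b : ℕ) = 0 := by rw [hb0]; rfl
        omega
      have hbv : (b : ℕ) ≠ 0 := fun hv => hb (Fin.ext hv)
      have hcne : c ≠ 0 := by
        intro hc0
        have : (c : ℕ) = 0 := by rw [hc0]; rfl
        omega
      rw [← Fin.succ_pred a ha, ← Fin.succ_pred b hb, ← Fin.succ_pred c hcne] at hcon
      simp only [e1_succ, Fin.castSucc_lt_castSucc_iff] at hcon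
      refine h _ _ _ ?_ ?_ hcon
      · simp only [Fin.coe_pred]; omega
      · simp only [Fin.coe_pred]; omega

/-- Restriction of a permutation fixing the last point. -/
def d0 {n : ℕ} (π : Equiv.Perm (Fin (n + 1))) (h : π (Fin.last n) = Fin.last n) :
    Equiv.Perm (Fin n) where
  toFun j := (π j.castSucc).castPred fun hc =>
    (Fin.castSucc_lt_last j).ne (π.injective (hc.trans h.symm))
  invFun j := (π⁻¹ j.castSucc).castPred fun hc =>
    (Fin.castSucc_lt_last j).ne (by rw [← h, ← hc, show π (π⁻¹ j.castSucc) = j.castSucc from π.apply_symm_apply _])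
  left_inv := by intro j; simp
  right_inv := by intro j; simp

lemma e0_d0 {n : ℕ} (π : Equiv.Perm (Fin (n + 1))) (h : π (Fin.last n) = Fin.last n) :
    e0 (d0 π h) = π := by
  refine Equiv.ext fun i => ?_
  induction i using Fin.lastCases with
  | last => rw [e0_last, h]
  | cast j =>
    rw [e0_castSucc]
    simp only [d0, Equiv.coe_fn_mk, Fin.castSucc_castPred]

/-- Restriction of a permutation sending `0` to the last point. -/
def d1 {n : ℕ} (π : Equiv.Perm (Fin (n + 1))) (h : π 0 = Fin.last n) :
    Equiv.Perm (Fin n) where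
  toFun j := (π j.succ).castPred fun hc =>
    Fin.succ_ne_zero j (π.injective (hc.trans h.symm))
  invFun j := (π⁻¹ j.castSucc).pred fun hc =>
    (Fin.castSucc_lt_last j).ne (by rw [← h, ← hc, show π (π⁻¹ j.castSucc) = j.castSucc from π.apply_symm_apply _])
  left_inv := by intro j; simp
  right_inv := by intro j; simp

lemma e1_d1 {n : ℕ} (π : Equiv.Perm (Fin (n + 1))) (h : π 0 = Fin.last n) :
    e1 (d1 π h) = π := by
  refine Equiv.ext fun i => ?_
  induction i using Fin.cases with
  | zero => rw [e1_zero, h]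
  | succ j =>
    rw [e1_succ]
    simp only [d1, Equiv.coe_fn_mk, Fin.castSucc_castPred]

lemma noPeak_decomp {n : ℕ} (π : Equiv.Perm (Fin (n + 2))) (h : NoPeak π) :
    (∃ σ, π = e0 σ) ∨ (∃ σ, π = e1 σ) := by
  obtain ⟨b, hb⟩ : ∃ b, π b = Fin.last (n + 1) :=
    ⟨π⁻¹ (Fin.last (n + 1)), π.apply_symm_apply _⟩
  have hkey : b = 0 ∨ b = Fin.last (n + 1) := by
    by_contra hcon
    push_neg at hcon
    obtain ⟨h0, hl⟩ := hcon
    have hv0 : (b : ℕ) ≠ 0 := fun hv => h0 (Fin.ext hv)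
    have hvl : (b : ℕ) ≠ n + 1 := fun hv => hl (Fin.ext hv)
    have hblt := b.isLt
    refine h ⟨(b : ℕ) - 1, by omega⟩ b ⟨(b : ℕ) + 1, by omega⟩
      (by simp; omega) (by simp) ⟨?_, ?_⟩
    · rw [hb, Fin.lt_last_iff_ne_last]
      intro hc
      have h2 := π.injective (hc.trans hb.symm)
      have h3 : ((⟨(b : ℕ) - 1, by omega⟩ : Fin (n + 2)) : ℕ) = (b : ℕ) := congrArg Fin.val h2
      simp at h3
      omega
    · rw [hb, Fin.lt_last_iff_ne_last]
      intro hc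
      have h2 := π.injective (hc.trans hb.symm)
      have h3 : ((⟨(b : ℕ) + 1, by omega⟩ : Fin (n + 2)) : ℕ) = (b : ℕ) := congrArg Fin.val h2
      simp at h3
  rcases hkey with h0 | hl
  · exact Or.inr ⟨d1 π (h0 ▸ hb), (e1_d1 π _).symm⟩
  · exact Or.inl ⟨d0 π (hl ▸ hb), (e0_d0 π _).symm⟩

end aux10c
section aux10d

lemma ppoly_one : Ppoly ∅ 1 = 1 := by
  unfold Ppoly
  have huniv : (Finset.univ.filter fun π : Equiv.Perm (Fin 1) => PeakSet π = ∅)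
      = Finset.univ := by
    refine Finset.filter_true_of_mem fun π _ => ?_
    rw [peakSet_eq_empty_iff]
    intro a b c hab hbc hcon
    have := a.isLt
    have := b.isLt
    omega
  have hinv : ∀ π : Equiv.Perm (Fin 1), invNum π = 0 := by
    intro π
    unfold invNum
    rw [Finset.card_eq_zero, Finset.filter_eq_empty_iff]
    rintro ⟨p, q⟩ - ⟨hlt, -⟩
    rw [Fin.lt_def] at hlt
    have := p.isLt
    have := q.isLt
    omega
  rw [huniv]
  rw [Finset.sum_congr rfl fun π _ => by rw [hinv π, pow_zero]]
  rw [Finset.sum_const, Finset.card_univ, Fintype.card_perm, Fintype.card_fin]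
  simp

lemma ppoly_succ (n : ℕ) :
    Ppoly ∅ (n + 2) = (1 + X ^ (n + 1)) * Ppoly ∅ (n + 1) := by
  unfold Ppoly
  have hset :
      (Finset.univ.filter fun π : Equiv.Perm (Fin (n + 2)) => PeakSet π = ∅)
        = ((Finset.univ.filter fun σ : Equiv.Perm (Fin (n + 1)) => PeakSet σ = ∅).image e0)
          ∪ ((Finset.univ.filter fun σ : Equiv.Perm (Fin (n + 1)) => PeakSet σ = ∅).image e1) := by
    ext π
    simp only [Finset.mem_filter, Finset.mem_univ, true_and, Finset.mem_union, Finset.mem_image]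
    constructor
    · intro hπ
      rcases noPeak_decomp π ((peakSet_eq_empty_iff π).mp hπ) with ⟨σ, rfl⟩ | ⟨σ, rfl⟩
      · exact Or.inl ⟨σ, (peakSet_eq_empty_iff σ).mpr
          ((noPeak_e0_iff σ).mp ((peakSet_eq_empty_iff _).mp hπ)), rfl⟩
      · exact Or.inr ⟨σ, (peakSet_eq_empty_iff σ).mpr
          ((noPeak_e1_iff σ).mp ((peakSet_eq_empty_iff _).mp hπ)), rfl⟩
    · rintro (⟨σ, hσ, rfl⟩ | ⟨σ, hσ, rfl⟩)
      · exact (peakSet_eq_empty_iff _).mpr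
          ((noPeak_e0_iff σ).mpr ((peakSet_eq_empty_iff σ).mp hσ))
      · exact (peakSet_eq_empty_iff _).mpr
          ((noPeak_e1_iff σ).mpr ((peakSet_eq_empty_iff σ).mp hσ))
  have hdisj : Disjoint
      ((Finset.univ.filter fun σ : Equiv.Perm (Fin (n + 1)) => PeakSet σ = ∅).image e0)
      ((Finset.univ.filter fun σ : Equiv.Perm (Fin (n + 1)) => PeakSet σ = ∅).image e1) := by
    rw [Finset.disjoint_left]
    rintro π hπ0 hπ1
    simp only [Finset.mem_image] at hπ0 hπ1
    obtain ⟨σ, -, rfl⟩ := hπ0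
    obtain ⟨τ, -, hτ⟩ := hπ1
    have h0 : e1 τ 0 = Fin.last (n + 1) := e1_zero τ
    have h1 : e0 σ 0 ≠ Fin.last (n + 1) := by
      have hz : (0 : Fin (n + 2)) = (0 : Fin (n + 1)).castSucc := by simp
      rw [hz, e0_castSucc]
      exact (Fin.castSucc_lt_last _).ne
    rw [hτ] at h0
    exact h1 h0
  rw [hset, Finset.sum_union hdisj,
    Finset.sum_image (fun x _ y _ h => e0_injective h),
    Finset.sum_image (fun x _ y _ h => e1_injective h)]
  simp only [invNum_e0, invNum_e1, pow_add]
  rw [add_mul, one_mul, Finset.mul_sum]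

lemma ppoly_eq_qPoch (n : ℕ) : Ppoly ∅ (n + 1) = qPoch n := by
  induction n with
  | zero => simpa [qPoch] using ppoly_one
  | succ m ih =>
    rw [ppoly_succ m, ih]
    unfold qPoch
    rw [Finset.prod_range_succ]
    ring

end aux10d


/-- `P_∅(n,q) = (−q;q)_{n-1} = (1+q)(1+q²)⋯(1+q^{n-1})` for `n ≥ 1`. -/
theorem stmt10 (n : ℕ) (hn : 1 ≤ n) : Ppoly ∅ n = qPoch (n - 1) := by
  obtain ⟨m, rfl⟩ : ∃ m, n = m + 1 := ⟨n - 1, by omega⟩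
  simpa using ppoly_eq_qPoch m

end
end
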